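/- arXiv:1502.04846 — 3 statements merged into one kernel-verified Lean document; each statement's English description precedes it below -/
import Mathlib

section
/- Let A, B ⊆ ℝⁿ with A ⊆ B and bdry(B) ⊆ A. If A is convex, then B is convex. -/
/-- If `A ⊆ B`, the boundary of `B` is contained in `A`, and `A` is convex,
then `B` is convex. -/
theorem convex_of_subset_frontier_subset {n : ℕ}
    (A B : Set (EuclideanSpace ℝ (Fin n))) (hAB : A ⊆ B)
    (hfr : frontier B ⊆ A) (hA : Convex ℝ A) : Convex ℝ B := by
  -- B is closed
  have hBclosed : IsClosed B := by
    rw [← closure_subset_iff_isClosed, closure_eq_self_union_frontier]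
    exact Set.union_subset (Set.Subset.refl B) (hfr.trans hAB)
  intro x hx y hy a b ha hb hab
  by_contra hz
  set f : ℝ → EuclideanSpace ℝ (Fin n) := fun t => x + t • (y - x) with hf
  have hfc : Continuous f := by fun_prop
  have hfb : f b = a • x + b • y := by
    have : a = 1 - b := by linarith
    simp [hf, this, smul_sub, sub_smul]
    module
  set S : Set ℝ := f ⁻¹' B with hS
  have hSclosed : IsClosed S := hBclosed.preimage hfc
  have h0S : (0 : ℝ) ∈ S := by simp [hS, hf, hx]
  have h1S : (1 : ℝ) ∈ S := by
    simp only [hS, hf, Set.mem_preimage]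
    have : x + (1:ℝ) • (y - x) = y := by module
    rw [this]; exact hy
  have hbS : b ∉ S := by
    simp only [hS, Set.mem_preimage, hfb]; exact hz
  set T₀ : Set ℝ := S ∩ Set.Iic b with hT₀
  set T₁ : Set ℝ := S ∩ Set.Ici b with hT₁
  have hT₀ne : T₀.Nonempty := ⟨0, h0S, hb⟩
  have hT₁ne : T₁.Nonempty := ⟨1, h1S, Set.mem_Ici.2 (by linarith)⟩
  set t₀ := sSup T₀ with ht₀
  set t₁ := sInf T₁ with ht₁
  have ht₀mem : t₀ ∈ T₀ :=
    (hSclosed.inter isClosed_Iic).csSup_mem hT₀ne ⟨b, fun u hu => hu.2⟩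
  have ht₁mem : t₁ ∈ T₁ :=
    (hSclosed.inter isClosed_Ici).csInf_mem hT₁ne ⟨b, fun u hu => hu.2⟩
  have ht₀lt : t₀ < b := lt_of_le_of_ne (Set.mem_Iic.1 ht₀mem.2)
    (fun h => hbS (by rw [← h]; exact ht₀mem.1))
  have ht₁gt : b < t₁ := lt_of_le_of_ne (Set.mem_Ici.1 ht₁mem.2)
    (fun h => hbS (by rw [h]; exact ht₁mem.1))
  -- frontier membership for f t₀
  have hfront₀ : f t₀ ∈ frontier B := by
    rw [hBclosed.frontier_eq]
    refine ⟨ht₀mem.1, fun hint => ?_⟩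
    have hopen : IsOpen (f ⁻¹' interior B) := isOpen_interior.preimage hfc
    obtain ⟨ε, hε, hball⟩ := Metric.isOpen_iff.1 hopen t₀ hint
    set t := min (t₀ + ε / 2) b with ht
    have htS : t ∈ T₀ := by
      refine ⟨?_, Set.mem_Iic.2 (min_le_right _ _)⟩
      have : t ∈ f ⁻¹' interior B := by
        apply hball
        rw [Metric.mem_ball, Real.dist_eq, abs_lt]
        constructor
        · have : t₀ < t := lt_min (by linarith) ht₀lt
          linarith
        · have : t ≤ t₀ + ε / 2 := min_le_left _ _
          linarith
      exact Set.mem_preimage.2 (interior_subset (Set.mem_preimage.1 this))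
    have : t ≤ t₀ := le_csSup ⟨b, fun u hu => hu.2⟩ htS
    have : t₀ < t := lt_min (by linarith) ht₀lt
    linarith
  have hfront₁ : f t₁ ∈ frontier B := by
    rw [hBclosed.frontier_eq]
    refine ⟨ht₁mem.1, fun hint => ?_⟩
    have hopen : IsOpen (f ⁻¹' interior B) := isOpen_interior.preimage hfc
    obtain ⟨ε, hε, hball⟩ := Metric.isOpen_iff.1 hopen t₁ hint
    set t := max (t₁ - ε / 2) b with ht
    have htS : t ∈ T₁ := by
      refine ⟨?_, Set.mem_Ici.2 (le_max_right _ _)⟩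
      have : t ∈ f ⁻¹' interior B := by
        apply hball
        rw [Metric.mem_ball, Real.dist_eq, abs_lt]
        constructor
        · have : t₁ - ε / 2 ≤ t := le_max_left _ _
          linarith
        · have : t < t₁ := max_lt (by linarith) ht₁gt
          linarith
      exact Set.mem_preimage.2 (interior_subset (Set.mem_preimage.1 this))
    have : t₁ ≤ t := csInf_le ⟨b, fun u hu => hu.2⟩ htS
    have : t < t₁ := max_lt (by linarith) ht₁gt
    linarith
  -- now f b is a convex combination of f t₀ and f t₁
  have ht01 : t₀ < t₁ := ht₀lt.trans ht₁gt
  set s := (b - t₀) / (t₁ - t₀) with hs'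
  have hsnn : 0 ≤ s := div_nonneg (by linarith) (by linarith)
  have hsle : s ≤ 1 := by
    rw [div_le_one (by linarith)]; linarith
  have hne : t₁ - t₀ ≠ 0 := by linarith
  have hcomb : (1 - s) * t₀ + s * t₁ = b := by
    have h := div_mul_cancel₀ (b - t₀) hne
    rw [hs']
    linear_combination h
  have hmem : (1 - s) • f t₀ + s • f t₁ ∈ A :=
    hA (hfr hfront₀) (hfr hfront₁) (by linarith) hsnn (by ring)
  have haff : (1 - s) • f t₀ + s • f t₁ = f b := by
    rw [← hcomb]
    simp only [hf]
    module
  rw [haff, hfb] at hmem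
  exact hz (hAB hmem)
end

section
/- Let T: ℝⁿ → [0,∞] be the minimum time function for the differential inclusion ẋ ∈ F(x) with closed target K, where F satisfies (F). For x₀ ∈ K, the horizontal proximal subdifferential of T at x₀ equals N^P_K(x₀) ∩ {ζ ∈ ℝⁿ : h(x₀, ζ) ≥ 0}, where h(x,ζ) = min_{v ∈ F(x)} ⟨v, ζ⟩. -/
open scoped RealInnerProductSpace ENNReal
open MeasureTheory Set

noncomputable section

/-- A trajectory of the differential inclusion `ẋ ∈ F(x)` on `[0,T]` starting at `x₀`:
an absolutely continuous curve, encoded by an integrable velocity selection `v` with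
`v t ∈ F (x t)` a.e. and `x t = x₀ + ∫₀ᵗ v`. -/
def IsTrajectory {n : ℕ} (F : EuclideanSpace ℝ (Fin n) → Set (EuclideanSpace ℝ (Fin n)))
    (x₀ : EuclideanSpace ℝ (Fin n)) (T : ℝ) (x : ℝ → EuclideanSpace ℝ (Fin n)) : Prop :=
  x 0 = x₀ ∧ ∃ v : ℝ → EuclideanSpace ℝ (Fin n),
    IntervalIntegrable v volume 0 T ∧
    (∀ᵐ t ∂(volume.restrict (Set.Ioc (0:ℝ) T)), v t ∈ F (x t)) ∧
    ∀ t ∈ Set.Icc (0:ℝ) T, x t = x₀ + ∫ s in (0:ℝ)..t, v s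

/-- Times at which some trajectory starting at `x₀` reaches the target `K`. -/
def reachTimes {n : ℕ} (F : EuclideanSpace ℝ (Fin n) → Set (EuclideanSpace ℝ (Fin n)))
    (K : Set (EuclideanSpace ℝ (Fin n))) (x₀ : EuclideanSpace ℝ (Fin n)) : Set ℝ :=
  {T | 0 ≤ T ∧ ∃ x : ℝ → EuclideanSpace ℝ (Fin n), IsTrajectory F x₀ T x ∧ x T ∈ K}

/-- The minimum time function `𝒯`, with value `∞` when `K` is unreachable from `x₀`. -/
def minTime {n : ℕ} (F : EuclideanSpace ℝ (Fin n) → Set (EuclideanSpace ℝ (Fin n)))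
    (K : Set (EuclideanSpace ℝ (Fin n))) (x₀ : EuclideanSpace ℝ (Fin n)) : ℝ≥0∞ :=
  sInf (ENNReal.ofReal '' reachTimes F K x₀)

/-- Assumption (F): nonempty convex compact values, local Lipschitz continuity,
and linear growth. -/
structure AssumptionF {n : ℕ}
    (F : EuclideanSpace ℝ (Fin n) → Set (EuclideanSpace ℝ (Fin n))) : Prop where
  nonempty : ∀ x, (F x).Nonempty
  convex : ∀ x, Convex ℝ (F x)
  compact : ∀ x, IsCompact (F x)
  locLip : ∀ C : Set (EuclideanSpace ℝ (Fin n)), IsCompact C → ∃ L > (0:ℝ),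
    ∀ x ∈ C, ∀ y ∈ C, ∀ v ∈ F x, ∃ w ∈ F y, ‖v - w‖ ≤ L * ‖x - y‖
  growth : ∃ γ > (0:ℝ), ∀ x, ∀ v ∈ F x, ‖v‖ ≤ γ * (1 + ‖x‖)

/-- The minimized Hamiltonian `h(x,ζ) = min_{v ∈ F(x)} ⟪v, ζ⟫`. -/
def minHam {n : ℕ} (F : EuclideanSpace ℝ (Fin n) → Set (EuclideanSpace ℝ (Fin n)))
    (x ζ : EuclideanSpace ℝ (Fin n)) : ℝ :=
  sInf ((fun v => ⟪v, ζ⟫) '' F x)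

/-- The proximal normal cone to a set `S ⊆ ℝⁿ` at `x`. -/
def IsProxNormal {n : ℕ} (S : Set (EuclideanSpace ℝ (Fin n))) (x v : EuclideanSpace ℝ (Fin n)) :
    Prop :=
  ∃ σ : ℝ, 0 ≤ σ ∧ ∀ y ∈ S, ⟪v, y - x⟫ ≤ σ * ‖y - x‖ ^ 2

/-- The sublevel set `𝓡(r) = {y : 𝒯(y) ≤ r}` of the minimum time function. -/
def sublevel {n : ℕ} (F : EuclideanSpace ℝ (Fin n) → Set (EuclideanSpace ℝ (Fin n)))
    (K : Set (EuclideanSpace ℝ (Fin n))) (r : ℝ) : Set (EuclideanSpace ℝ (Fin n)) :=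
  {y | minTime F K y ≤ ENNReal.ofReal r}

/-- Membership in the epigraph of the minimum time function: `β ≥ 𝒯(y)` (and `β ≥ 0`). -/
def memEpi {n : ℕ} (F : EuclideanSpace ℝ (Fin n) → Set (EuclideanSpace ℝ (Fin n)))
    (K : Set (EuclideanSpace ℝ (Fin n))) (y : EuclideanSpace ℝ (Fin n)) (β : ℝ) : Prop :=
  0 ≤ β ∧ minTime F K y ≤ ENNReal.ofReal β

/-- `(ζ, α)` is a proximal normal to the epigraph of `𝒯` at `(x, 𝒯(x))`, where
`τ = 𝒯(x)` (assumed finite). -/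
def IsProxNormalEpi {n : ℕ} (F : EuclideanSpace ℝ (Fin n) → Set (EuclideanSpace ℝ (Fin n)))
    (K : Set (EuclideanSpace ℝ (Fin n))) (x : EuclideanSpace ℝ (Fin n))
    (ζ : EuclideanSpace ℝ (Fin n)) (α : ℝ) : Prop :=
  ∃ σ : ℝ, 0 ≤ σ ∧ ∀ y β, memEpi F K y β →
    ⟪ζ, y - x⟫ + α * (β - (minTime F K x).toReal) ≤
      σ * (‖y - x‖ ^ 2 + |β - (minTime F K x).toReal| ^ 2)

/-- The proximal subdifferential `∂^P 𝒯(x) = {ζ : (ζ,-1) ∈ N^P_{epi 𝒯}(x,𝒯(x))}`. -/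
def proxSubdiff {n : ℕ} (F : EuclideanSpace ℝ (Fin n) → Set (EuclideanSpace ℝ (Fin n)))
    (K : Set (EuclideanSpace ℝ (Fin n))) (x : EuclideanSpace ℝ (Fin n)) :
    Set (EuclideanSpace ℝ (Fin n)) :=
  {ζ | IsProxNormalEpi F K x ζ (-1)}

/-- The horizontal proximal subdifferential `∂^∞ 𝒯(x) = {ζ : (ζ,0) ∈ N^P_{epi 𝒯}(x,𝒯(x))}`. -/
def horizSubdiff {n : ℕ} (F : EuclideanSpace ℝ (Fin n) → Set (EuclideanSpace ℝ (Fin n)))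
    (K : Set (EuclideanSpace ℝ (Fin n))) (x : EuclideanSpace ℝ (Fin n)) :
    Set (EuclideanSpace ℝ (Fin n)) :=
  {ζ | IsProxNormalEpi F K x ζ 0}

end

noncomputable section Aux
variable {E : Type*} [NormedAddCommGroup E] [InnerProductSpace ℝ E]

variable {E : Type*} [NormedAddCommGroup E] [InnerProductSpace ℝ E]

noncomputable def cproj (C : Set E) (u : E) : E :=
  @dite _ (C.Nonempty ∧ IsComplete C ∧ Convex ℝ C) (Classical.dec _)
    (fun h => (exists_norm_eq_iInf_of_complete_convex h.1 h.2.1 h.2.2 u).choose)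
    (fun _ => u)

theorem cproj_spec {C : Set E} (h1 : C.Nonempty) (h2 : IsComplete C) (h3 : Convex ℝ C) (u : E) :
    cproj C u ∈ C ∧ ‖u - cproj C u‖ = ⨅ w : C, ‖u - w‖ := by
  rw [cproj, dif_pos ⟨h1, h2, h3⟩]
  obtain ⟨hm, he⟩ := (exists_norm_eq_iInf_of_complete_convex h1 h2 h3 u).choose_spec
  exact ⟨hm, he⟩

theorem cproj_mem {C : Set E} (h1 : C.Nonempty) (h2 : IsComplete C) (h3 : Convex ℝ C) (u : E) :
    cproj C u ∈ C := (cproj_spec h1 h2 h3 u).1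

theorem cproj_inner_le {C : Set E} (h1 : C.Nonempty) (h2 : IsComplete C) (h3 : Convex ℝ C)
    (u : E) {c : E} (hc : c ∈ C) : ⟪u - cproj C u, c - cproj C u⟫ ≤ 0 := by
  have := (norm_eq_iInf_iff_real_inner_le_zero h3 (cproj_mem h1 h2 h3 u)).1
    (cproj_spec h1 h2 h3 u).2
  exact this c hc

theorem cproj_dist_le {C : Set E} (h1 : C.Nonempty) (h2 : IsComplete C) (h3 : Convex ℝ C)
    (u : E) {c : E} (hc : c ∈ C) : ‖u - cproj C u‖ ≤ ‖u - c‖ := by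
  rw [(cproj_spec h1 h2 h3 u).2]
  haveI : Nonempty C := h1.to_subtype
  exact ciInf_le ⟨0, Set.forall_mem_range.2 fun _ => norm_nonneg _⟩ (⟨c, hc⟩ : C)

theorem cproj_nonexpansive {C : Set E} (h1 : C.Nonempty) (h2 : IsComplete C) (h3 : Convex ℝ C)
    (u₁ u₂ : E) : ‖cproj C u₁ - cproj C u₂‖ ≤ ‖u₁ - u₂‖ := by
  set p₁ := cproj C u₁
  set p₂ := cproj C u₂
  have hp1 : ⟪u₁ - p₁, p₂ - p₁⟫ ≤ 0 := cproj_inner_le h1 h2 h3 u₁ (cproj_mem h1 h2 h3 u₂)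
  have hp2 : ⟪u₂ - p₂, p₁ - p₂⟫ ≤ 0 := cproj_inner_le h1 h2 h3 u₂ (cproj_mem h1 h2 h3 u₁)
  have key : ‖p₁ - p₂‖ ^ 2 ≤ ⟪u₁ - u₂, p₁ - p₂⟫ := by
    have e : ⟪u₁ - u₂, p₁ - p₂⟫ = ‖p₁ - p₂‖ ^ 2 + (-⟪u₁ - p₁, p₂ - p₁⟫ - ⟪u₂ - p₂, p₁ - p₂⟫)
        + (- ‖p₁ - p₂‖ ^ 2 + ⟪p₁ - p₂, p₁ - p₂⟫) := by
      have h' : (u₁ - u₂ : E) = (p₁ - p₂) + (u₁ - p₁) - (u₂ - p₂) := by abel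
      rw [h', inner_sub_left, inner_add_left]
      have : ⟪u₁ - p₁, p₁ - p₂⟫ = -⟪u₁ - p₁, p₂ - p₁⟫ := by
        rw [← inner_neg_right]; congr 1; abel
      rw [this]; ring
    rw [real_inner_self_eq_norm_sq] at e
    linarith
  have habs : ⟪u₁ - u₂, p₁ - p₂⟫ ≤ ‖u₁ - u₂‖ * ‖p₁ - p₂‖ := real_inner_le_norm _ _
  nlinarith [norm_nonneg (p₁ - p₂), norm_nonneg (u₁ - u₂)]

theorem cproj_sets_sq_est {A B : Set E} (hA1 : A.Nonempty) (hA2 : IsComplete A) (hA3 : Convex ℝ A)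
    (hB1 : B.Nonempty) (hB2 : IsComplete B) (hB3 : Convex ℝ B) (u : E) {δ : ℝ} (hδ : 0 ≤ δ)
    (h1 : ∃ b ∈ B, ‖cproj A u - b‖ ≤ δ) (h2 : ∃ a ∈ A, ‖cproj B u - a‖ ≤ δ) :
    ‖cproj A u - cproj B u‖ ^ 2 ≤ δ * (‖u - cproj A u‖ + ‖u - cproj B u‖) := by
  obtain ⟨b', hb'B, hb'⟩ := h1
  obtain ⟨a', ha'A, ha'⟩ := h2
  set a := cproj A u
  set b := cproj B u
  have k1 : ⟪u - b, a - b⟫ ≤ ‖u - b‖ * δ := by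
    have e : ⟪u - b, a - b⟫ = ⟪u - b, a - b'⟫ + ⟪u - b, b' - b⟫ := by
      rw [← inner_add_right]; congr 1; abel
    have t1 : ⟪u - b, a - b'⟫ ≤ ‖u - b‖ * ‖a - b'‖ := real_inner_le_norm _ _
    have t2 : ⟪u - b, b' - b⟫ ≤ 0 := cproj_inner_le hB1 hB2 hB3 u hb'B
    have t3 : ‖u - b‖ * ‖a - b'‖ ≤ ‖u - b‖ * δ :=
      mul_le_mul_of_nonneg_left hb' (norm_nonneg _)
    linarith
  have k2 : ⟪u - a, b - a⟫ ≤ ‖u - a‖ * δ := by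
    have e : ⟪u - a, b - a⟫ = ⟪u - a, b - a'⟫ + ⟪u - a, a' - a⟫ := by
      rw [← inner_add_right]; congr 1; abel
    have t1 : ⟪u - a, b - a'⟫ ≤ ‖u - a‖ * ‖b - a'‖ := real_inner_le_norm _ _
    have t2 : ⟪u - a, a' - a⟫ ≤ 0 := cproj_inner_le hA1 hA2 hA3 u ha'A
    have t3 : ‖u - a‖ * ‖b - a'‖ ≤ ‖u - a‖ * δ :=
      mul_le_mul_of_nonneg_left ha' (norm_nonneg _)
    linarith
  have h3 : ⟪u - a, b - a⟫ = -⟪u - a, a - b⟫ := by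
    rw [← inner_neg_right]; congr 1; abel
  have e : ‖a - b‖ ^ 2 = ⟪u - b, a - b⟫ + ⟪u - a, b - a⟫ := by
    calc ‖a - b‖ ^ 2 = ⟪a - b, a - b⟫ := (real_inner_self_eq_norm_sq _).symm
      _ = ⟪(u - b) - (u - a), a - b⟫ := by rw [show (u - b) - (u - a) = a - b by abel]
      _ = ⟪u - b, a - b⟫ - ⟪u - a, a - b⟫ := inner_sub_left _ _ _
      _ = ⟪u - b, a - b⟫ + ⟪u - a, b - a⟫ := by rw [h3]; ring
  rw [e]; linarith

theorem cproj_est {A B : Set E} (hA1 : A.Nonempty) (hA2 : IsComplete A) (hA3 : Convex ℝ A)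
    (hB1 : B.Nonempty) (hB2 : IsComplete B) (hB3 : Convex ℝ B) (u₁ u₂ : E) {δ : ℝ} (hδ : 0 ≤ δ)
    (h1 : ∃ b ∈ B, ‖cproj A u₂ - b‖ ≤ δ) (h2 : ∃ a ∈ A, ‖cproj B u₂ - a‖ ≤ δ) :
    ‖cproj A u₁ - cproj B u₂‖ ≤ ‖u₁ - u₂‖ +
      Real.sqrt (δ * (‖u₂ - cproj A u₂‖ + ‖u₂ - cproj B u₂‖)) := by
  have tri : ‖cproj A u₁ - cproj B u₂‖ ≤ ‖cproj A u₁ - cproj A u₂‖ + ‖cproj A u₂ - cproj B u₂‖ :=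
    norm_sub_le_norm_sub_add_norm_sub _ _ _
  have t1 : ‖cproj A u₁ - cproj A u₂‖ ≤ ‖u₁ - u₂‖ := cproj_nonexpansive hA1 hA2 hA3 u₁ u₂
  have t2 : ‖cproj A u₂ - cproj B u₂‖ ≤
      Real.sqrt (δ * (‖u₂ - cproj A u₂‖ + ‖u₂ - cproj B u₂‖)) := by
    have hkey := cproj_sets_sq_est hA1 hA2 hA3 hB1 hB2 hB3 u₂ hδ h1 h2
    have hy : 0 ≤ δ * (‖u₂ - cproj A u₂‖ + ‖u₂ - cproj B u₂‖) :=
      mul_nonneg hδ (by positivity)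
    exact (Real.le_sqrt (norm_nonneg _) hy).2 hkey
  linarith


end Aux

section Apriori
/-- Gronwall-type a priori bound for trajectories staying near `x₀`. -/
theorem traj_apriori {E : Type*} [NormedAddCommGroup E] [NormedSpace ℝ E] [CompleteSpace E]
    {x₀ y : E} {t M : ℝ} {x w : ℝ → E}
    (ht : 0 ≤ t) (hw_int : IntervalIntegrable w volume 0 t)
    (hw_bdd : ∀ᵐ s ∂(volume.restrict (Set.Ioc (0:ℝ) t)), ‖x s - x₀‖ ≤ 1 → ‖w s‖ ≤ M)
    (hx : ∀ s ∈ Set.Icc (0:ℝ) t, x s = y + ∫ u in (0:ℝ)..s, w u)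
    (hy : ‖y - x₀‖ ≤ 1/2) (hM : 0 ≤ M) (htM : t * M ≤ 1/8) :
    ∀ s ∈ Set.Icc (0:ℝ) t, ‖x s - x₀‖ ≤ ‖y - x₀‖ + M * s := by
  have hP : ContinuousOn (fun s => y + ∫ u in (0:ℝ)..s, w u) (Icc 0 t) := by
    apply continuousOn_const.add
    have := intervalIntegral.continuousOn_primitive_interval' hw_int
      (by rw [Set.uIcc_of_le ht]; exact Set.left_mem_Icc.2 ht)
    rwa [Set.uIcc_of_le ht] at this
  have hxc : ContinuousOn x (Icc 0 t) := hP.congr hx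
  -- bootstrap estimate
  have boot : ∀ s ∈ Icc (0:ℝ) t, (∀ u ∈ Icc (0:ℝ) s, ‖x u - x₀‖ ≤ 1) →
      ∀ u ∈ Icc (0:ℝ) s, ‖x u - x₀‖ ≤ ‖y - x₀‖ + M * u := by
    intro s hs hall u hu
    have hu0 : (0:ℝ) ≤ u := hu.1
    have hut : u ≤ t := hu.2.trans hs.2
    have hxu : x u = y + ∫ r in (0:ℝ)..u, w r := hx u ⟨hu0, hut⟩
    have hint_u : IntervalIntegrable w volume 0 u := hw_int.mono_set
      (by rw [Set.uIcc_of_le ht, Set.uIcc_of_le hu0]; exact Set.Icc_subset_Icc le_rfl hut)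
    have h1 : ‖∫ r in (0:ℝ)..u, w r‖ ≤ ∫ r in (0:ℝ)..u, ‖w r‖ :=
      intervalIntegral.norm_integral_le_integral_norm hu0
    have h2 : (∫ r in (0:ℝ)..u, ‖w r‖) ≤ ∫ r in (0:ℝ)..u, (M:ℝ) := by
      apply intervalIntegral.integral_mono_ae_restrict hu0 hint_u.norm
        intervalIntegrable_const
      have hsub : Set.Ioc (0:ℝ) u ⊆ Set.Ioc (0:ℝ) t := Set.Ioc_subset_Ioc le_rfl hut
      have hae : ∀ᵐ r ∂(volume.restrict (Set.Ioc (0:ℝ) u)), ‖x r - x₀‖ ≤ 1 → ‖w r‖ ≤ M :=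
        ae_restrict_of_ae_restrict_of_subset hsub hw_bdd
      have hres : (volume.restrict (Set.Icc (0:ℝ) u)) = volume.restrict (Set.Ioc (0:ℝ) u) :=
        (Measure.restrict_congr_set Ioc_ae_eq_Icc).symm
      rw [hres]
      filter_upwards [hae, ae_restrict_mem measurableSet_Ioc] with r h hr
      exact h (hall r ⟨hr.1.le, hr.2.trans hu.2⟩)
    have h3 : (∫ _ in (0:ℝ)..u, (M:ℝ)) = M * u := by
      simp [intervalIntegral.integral_const, smul_eq_mul, mul_comm]
    calc ‖x u - x₀‖ = ‖(y - x₀) + ∫ r in (0:ℝ)..u, w r‖ := by rw [hxu]; congr 1; abel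
      _ ≤ ‖y - x₀‖ + ‖∫ r in (0:ℝ)..u, w r‖ := norm_add_le _ _
      _ ≤ ‖y - x₀‖ + M * u := by rw [h3] at h2; linarith
  -- real induction
  set S : Set ℝ := {p | ∀ u ∈ Icc (0:ℝ) p, ‖x u - x₀‖ ≤ 3/4} with hSdef
  have hx0 : x 0 = y := by
    have := hx 0 ⟨le_rfl, ht⟩; simpa using this
  have h0S : (0:ℝ) ∈ S := by
    intro u hu
    have : u = 0 := le_antisymm hu.2 hu.1
    subst this
    rw [hx0]; linarith
  have hS : Icc (0:ℝ) t ⊆ S := by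
    apply IsClosed.Icc_subset_of_forall_exists_gt _ h0S
    · -- step
      intro p hp q hq
      have hpS : p ∈ S := hp.1
      have hpI : p ∈ Ico (0:ℝ) t := hp.2
      have hbelow : ∀ u ∈ Icc (0:ℝ) p, ‖x u - x₀‖ ≤ ‖y - x₀‖ + M * u := by
        apply boot p ⟨hpI.1, hpI.2.le⟩
        intro u hu; exact (hpS u hu).trans (by norm_num)
      have hgp : ‖x p - x₀‖ ≤ 5/8 := by
        have := hbelow p ⟨hpI.1, le_rfl⟩
        have hMu : M * p ≤ 1/8 := by
          calc M * p ≤ M * t := by nlinarith [hpI.2.le]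
            _ ≤ 1/8 := by linarith [htM]
        linarith
      -- continuity at p
      have hc := hxc p ⟨hpI.1, hpI.2.le⟩
      rw [Metric.continuousWithinAt_iff] at hc
      obtain ⟨δ, hδ0, hδ⟩ := hc (1/16) (by norm_num)
      refine ⟨min (min q (p + δ/2)) t, ?_, ?_, min_le_left _ _ |>.trans (min_le_left _ _)⟩
      · -- membership in S
        intro u hu
        rcases le_or_gt u p with h | h
        · exact hpS u ⟨hu.1, h⟩
        · have hut : u ≤ t := hu.2.trans (min_le_right _ _)
          have hud : dist u p < δ := by
            rw [Real.dist_eq, abs_of_nonneg (by linarith)]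
            have : u ≤ p + δ/2 := hu.2.trans ((min_le_left _ _).trans (min_le_right _ _))
            linarith
          have hcl := hδ ⟨hu.1, hut⟩ hud
          rw [dist_eq_norm] at hcl
          have htri := norm_sub_le_norm_sub_add_norm_sub (x u) (x p) x₀
          linarith [hgp]
      · -- in Ioc p _
        exact lt_min (lt_min hq (by linarith)) hpI.2
    · -- closedness
      apply IsSeqClosed.isClosed
      intro pseq p hmem hlim
      have hpI : p ∈ Icc (0:ℝ) t := isClosed_Icc.isSeqClosed (fun k => (hmem k).2) hlim
      refine ⟨?_, hpI⟩
      intro u hu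
      rcases lt_or_eq_of_le hu.2 with h | h
      · have : ∀ᶠ k in Filter.atTop, u < pseq k := hlim.eventually (eventually_gt_nhds h)
        obtain ⟨k, hk⟩ := this.exists
        exact (hmem k).1 u ⟨hu.1, hk.le⟩
      · subst h
        have htend : Filter.Tendsto (fun k => ‖x (pseq k) - x₀‖) Filter.atTop
            (nhds ‖x u - x₀‖) := by
          have h1 : Filter.Tendsto pseq Filter.atTop (nhdsWithin u (Icc (0:ℝ) t)) :=
            tendsto_nhdsWithin_iff.2 ⟨hlim, Filter.Eventually.of_forall fun k => (hmem k).2⟩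
          have h2 := (hxc u hpI).tendsto.comp h1
          exact (h2.sub_const x₀).norm
        apply le_of_tendsto htend
        filter_upwards with k
        exact (hmem k).1 (pseq k) ⟨(hmem k).2.1, le_rfl⟩
  intro s hs
  apply boot s hs (fun u hu => ((hS ⟨hu.1, hu.2.trans hs.2⟩) u ⟨hu.1, le_rfl⟩).trans (by norm_num))
    s ⟨hs.1, le_rfl⟩


end Apriori

section MinTimeFacts

variable {n : ℕ} {F : EuclideanSpace ℝ (Fin n) → Set (EuclideanSpace ℝ (Fin n))}
  {K : Set (EuclideanSpace ℝ (Fin n))} {x₀ : EuclideanSpace ℝ (Fin n)}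

theorem zero_mem_reachTimes (hx₀ : x₀ ∈ K) : (0:ℝ) ∈ reachTimes F K x₀ := by
  refine ⟨le_rfl, fun _ => x₀, ⟨rfl, fun _ => 0, intervalIntegrable_const, ?_, ?_⟩, hx₀⟩
  · rw [Set.Ioc_self, Measure.restrict_empty]
    simp
  · intro s hs
    have : s = 0 := le_antisymm hs.2 hs.1
    subst this; simp

theorem minTime_eq_zero (hx₀ : x₀ ∈ K) : minTime F K x₀ = 0 := by
  refine le_antisymm ?_ zero_le
  have : ENNReal.ofReal 0 ∈ ENNReal.ofReal '' reachTimes F K x₀ :=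
    ⟨0, zero_mem_reachTimes hx₀, rfl⟩
  simpa [minTime] using sInf_le this

theorem intervalIntegrable_inner_left {a b : ℝ} {w : ℝ → EuclideanSpace ℝ (Fin n)}
    (ζ : EuclideanSpace ℝ (Fin n)) (h : IntervalIntegrable w volume a b) :
    IntervalIntegrable (fun s => ⟪ζ, w s⟫) volume a b :=
  ⟨(innerSL ℝ ζ).integrable_comp h.1, (innerSL ℝ ζ).integrable_comp h.2⟩

end MinTimeFacts

section SupsetDir

variable {n : ℕ} {F : EuclideanSpace ℝ (Fin n) → Set (EuclideanSpace ℝ (Fin n))}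
  {K : Set (EuclideanSpace ℝ (Fin n))} {x₀ ζ : EuclideanSpace ℝ (Fin n)}

set_option maxHeartbeats 4000000 in
theorem horiz_of_prox (hF : AssumptionF F) (hx₀ : x₀ ∈ K)
    (hN : IsProxNormal K x₀ ζ) (hh : 0 ≤ minHam F x₀ ζ) : IsProxNormalEpi F K x₀ ζ 0 := by
  obtain ⟨σ₀, hσ₀, hNineq⟩ := hN
  obtain ⟨L, hL0, hL⟩ := hF.locLip (Metric.closedBall x₀ 1) (isCompact_closedBall _ _)
  obtain ⟨γ, hγ0, hγ⟩ := hF.growth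
  obtain ⟨M, hMdef⟩ : ∃ M : ℝ, M = γ * (1 + ‖x₀‖ + 1) := ⟨_, rfl⟩
  have hM : 0 < M := by
    rw [hMdef]
    have : (0:ℝ) < 1 + ‖x₀‖ + 1 := by positivity
    exact mul_pos hγ0 this
  obtain ⟨r, hrdef⟩ : ∃ r : ℝ, r = min (1/4) (1/(16*M)) := ⟨_, rfl⟩
  have hr0 : 0 < r := by rw [hrdef]; exact lt_min (by norm_num) (by positivity)
  have hr4 : r ≤ 1/4 := hrdef ▸ min_le_left _ _
  have hrM : r * M ≤ 1/16 := by
    have h1 : r ≤ 1/(16*M) := hrdef ▸ min_le_right _ _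
    have h16 : (0:ℝ) < 16*M := by positivity
    calc r * M ≤ (1/(16*M)) * M := by nlinarith
      _ = 1/16 := by field_simp; try ring
  obtain ⟨σ, hσdef⟩ : ∃ σ : ℝ, σ = σ₀ * (2 + 4*M^2) + L * ‖ζ‖ * (3/2 + M) + ‖ζ‖/r := ⟨_, rfl⟩
  have hσnn : 0 ≤ σ := by rw [hσdef]; positivity
  refine ⟨σ, hσnn, ?_⟩
  rintro y β ⟨hβ0, hβ⟩
  rw [minTime_eq_zero hx₀]
  simp only [ENNReal.toReal_zero, sub_zero, zero_mul, add_zero, sq_abs]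
  obtain ⟨d, hddef⟩ : ∃ d : ℝ, d = ‖y - x₀‖ := ⟨_, rfl⟩
  rw [show ‖y - x₀‖ = d from hddef.symm]
  have hd0 : 0 ≤ d := hddef ▸ norm_nonneg _
  have hinn : ⟪ζ, y - x₀⟫ ≤ ‖ζ‖ * d := by
    calc ⟪ζ, y - x₀⟫ ≤ ‖ζ‖ * ‖y - x₀‖ := real_inner_le_norm _ _
      _ = ‖ζ‖ * d := by rw [hddef]
  rcases le_or_gt r d with hcase | hdr
  · -- big ‖y - x₀‖
    have h1 : ‖ζ‖ * d ≤ (‖ζ‖/r) * d^2 := by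
      rw [div_mul_eq_mul_div, le_div_iff₀ hr0]
      have hkey : 0 ≤ ‖ζ‖ * d * (d - r) :=
        mul_nonneg (mul_nonneg (norm_nonneg ζ) hd0) (by linarith)
      nlinarith [hkey]
    have h2 : (‖ζ‖/r) * d^2 ≤ σ * (d^2 + β^2) := by
      have hσ' : ‖ζ‖/r ≤ σ := by
        have : 0 ≤ σ₀ * (2 + 4*M^2) + L * ‖ζ‖ * (3/2 + M) := by positivity
        linarith
      calc (‖ζ‖/r) * d^2 ≤ σ * d^2 := mul_le_mul_of_nonneg_right hσ' (sq_nonneg d)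
        _ ≤ σ * (d^2 + β^2) :=
          mul_le_mul_of_nonneg_left (by linarith [sq_nonneg β]) hσnn
    linarith
  rcases le_or_gt r β with hcase2 | hbr
  · -- big β
    have h1 : ‖ζ‖ * d ≤ (‖ζ‖/r) * β^2 := by
      rw [div_mul_eq_mul_div, le_div_iff₀ hr0]
      have hk1 : 0 ≤ ‖ζ‖ * (r - d) * r :=
        mul_nonneg (mul_nonneg (norm_nonneg ζ) (by linarith)) hr0.le
      have hk2 : 0 ≤ ‖ζ‖ * (β - r) * (β + r) :=
        mul_nonneg (mul_nonneg (norm_nonneg ζ) (by linarith)) (by linarith)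
      nlinarith [hk1, hk2]
    have h2 : (‖ζ‖/r) * β^2 ≤ σ * (d^2 + β^2) := by
      have hσ' : ‖ζ‖/r ≤ σ := by
        have : 0 ≤ σ₀ * (2 + 4*M^2) + L * ‖ζ‖ * (3/2 + M) := by positivity
        linarith
      calc (‖ζ‖/r) * β^2 ≤ σ * β^2 := mul_le_mul_of_nonneg_right hσ' (sq_nonneg β)
        _ ≤ σ * (d^2 + β^2) :=
          mul_le_mul_of_nonneg_left (by linarith [sq_nonneg d]) hσnn
    linarith
  -- small case
  obtain ⟨ε, hεdef⟩ : ∃ ε : ℝ, ε = d^2 + β^2 := ⟨_, rfl⟩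
  have hεnn : 0 ≤ ε := by rw [hεdef]; positivity
  rcases eq_or_lt_of_le hεnn with hε0 | hεpos

  · -- ε = 0 : y = x₀, β = 0
    have hd2 : d^2 = 0 := by nlinarith [sq_nonneg d, sq_nonneg β, hεdef]
    have hd : d = 0 := by rwa [pow_eq_zero_iff two_ne_zero] at hd2
    have hyx : y = x₀ := sub_eq_zero.1 (norm_eq_zero.1 (hddef ▸ hd))
    subst hyx
    simp only [sub_self, inner_zero_right]
    have : (0:ℝ) ≤ d^2 + β^2 := by positivity
    exact mul_nonneg hσnn this
  -- get a trajectory within time β + ε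
  have hlt : minTime F K y < ENNReal.ofReal (β + ε) := by
    calc minTime F K y ≤ ENNReal.ofReal β := hβ
      _ < ENNReal.ofReal (β + ε) := by
          rw [ENNReal.ofReal_lt_ofReal_iff (by linarith)]; linarith
  rw [minTime, sInf_lt_iff] at hlt
  obtain ⟨a, ⟨t', ht'reach, rfl⟩, hat⟩ := hlt
  obtain ⟨ht'0, x, ⟨hx0, w, hw_int, hw_mem, hxeq⟩, hxK⟩ := ht'reach
  have ht' : t' < β + ε := by
    rwa [ENNReal.ofReal_lt_ofReal_iff (by linarith)] at hat
  have hεsmall : ε ≤ 2*r^2 := by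
    have e1 : 0 ≤ (r - d)*(r + d) := mul_nonneg (by linarith) (by linarith)
    have e2 : 0 ≤ (r - β)*(r + β) := mul_nonneg (by linarith) (by linarith)
    rw [hεdef]; nlinarith [e1, e2]
  have ht'r : t' ≤ 2*r := by
    have e3 : r*r ≤ r*(1/4) := mul_le_mul_of_nonneg_left hr4 hr0.le
    nlinarith [e3, hεsmall, hbr, ht']
  have ht'M : t' * M ≤ 1/8 := by
    nlinarith [mul_le_mul_of_nonneg_right ht'r hM.le, hrM]
  -- a priori bound
  have hyd : ‖y - x₀‖ ≤ 1/2 := by rw [← hddef]; linarith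
  have hw_bdd : ∀ᵐ s ∂(volume.restrict (Set.Ioc (0:ℝ) t')),
      ‖x s - x₀‖ ≤ 1 → ‖w s‖ ≤ M := by
    filter_upwards [hw_mem] with s hsF hball
    calc ‖w s‖ ≤ γ * (1 + ‖x s‖) := hγ _ _ hsF
      _ ≤ γ * (1 + ‖x₀‖ + 1) := by
          have : ‖x s‖ ≤ ‖x₀‖ + 1 := by
            have := norm_sub_norm_le (x s) x₀
            linarith
          nlinarith
      _ = M := hMdef.symm
  have habound := traj_apriori ht'0 hw_int hw_bdd hxeq hyd hM.le ht'M
  have hball : ∀ s ∈ Set.Icc (0:ℝ) t', x s ∈ Metric.closedBall x₀ 1 := by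
    intro s hs
    rw [Metric.mem_closedBall, dist_eq_norm]
    have h1 := habound s hs
    have h2 : M * s ≤ M * t' := mul_le_mul_of_nonneg_left hs.2 hM.le
    have h3 : M * t' ≤ 1/8 := by nlinarith [ht'M]
    linarith
  -- the endpoint
  obtain ⟨z, hzdef⟩ : ∃ z, z = x t' := ⟨_, rfl⟩
  have hz : ⟪ζ, z - x₀⟫ ≤ σ₀ * ‖z - x₀‖^2 := hNineq z (hzdef ▸ hxK)
  have hzy : z = y + ∫ s in (0:ℝ)..t', w s := hzdef ▸ hxeq t' ⟨ht'0, le_rfl⟩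
  -- lower bound for the integral term
  have hx₀ball : x₀ ∈ Metric.closedBall x₀ 1 := Metric.mem_closedBall_self (by norm_num)
  have hbddBelow : BddBelow ((fun v => ⟪v, ζ⟫) '' F x₀) :=
    ((hF.compact x₀).image (continuous_id.inner continuous_const)).bddBelow
  have key_ae : ∀ᵐ s ∂(volume.restrict (Set.Ioc (0:ℝ) t')),
      -(L * ‖ζ‖ * (d + M * s)) ≤ ⟪ζ, w s⟫ := by
    filter_upwards [hw_mem, ae_restrict_mem measurableSet_Ioc] with s hsF hs
    have hsIcc : s ∈ Set.Icc (0:ℝ) t' := ⟨hs.1.le, hs.2⟩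
    obtain ⟨w', hw'F, hw'⟩ := hL (x s) (hball s hsIcc) x₀ hx₀ball (w s) hsF
    have h1 : 0 ≤ ⟪ζ, w'⟫ := by
      rw [real_inner_comm]
      exact hh.trans (csInf_le hbddBelow ⟨w', hw'F, rfl⟩)
    have h2 : ⟪ζ, w s⟫ = ⟪ζ, w'⟫ + ⟪ζ, w s - w'⟫ := by
      rw [← inner_add_right]; congr 1; abel
    have h3 : -(‖ζ‖ * ‖w s - w'‖) ≤ ⟪ζ, w s - w'⟫ := by
      have ha := abs_real_inner_le_norm ζ (w s - w')
      have hb := neg_abs_le ⟪ζ, w s - w'⟫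
      linarith
    have h4 : ‖ζ‖ * ‖w s - w'‖ ≤ ‖ζ‖ * (L * ‖x s - x₀‖) :=
      mul_le_mul_of_nonneg_left hw' (norm_nonneg _)
    have h5 : ‖x s - x₀‖ ≤ d + M * s := by rw [hddef]; exact habound s hsIcc
    have h6 : ‖ζ‖ * (L * ‖x s - x₀‖) ≤ ‖ζ‖ * (L * (d + M * s)) := by
      apply mul_le_mul_of_nonneg_left _ (norm_nonneg _)
      exact mul_le_mul_of_nonneg_left h5 hL0.le
    nlinarith [norm_nonneg ζ]
  have hinner_int : IntervalIntegrable (fun s => ⟪ζ, w s⟫) volume 0 t' :=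
    intervalIntegrable_inner_left ζ hw_int
  have hpoly_int : IntervalIntegrable (fun s => -(L * ‖ζ‖ * (d + M * s))) volume 0 t' := by
    apply Continuous.intervalIntegrable
    exact (continuous_const.mul (continuous_const.add (continuous_const.mul
      continuous_id))).neg
  have hIle : (∫ s in (0:ℝ)..t', -(L * ‖ζ‖ * (d + M * s))) ≤ ∫ s in (0:ℝ)..t', ⟪ζ, w s⟫ := by
    apply intervalIntegral.integral_mono_ae_restrict ht'0 hpoly_int hinner_int
    have hres : (volume.restrict (Set.Icc (0:ℝ) t')) = volume.restrict (Set.Ioc (0:ℝ) t') :=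
      (Measure.restrict_congr_set Ioc_ae_eq_Icc).symm
    rw [hres]
    exact key_ae
  have hIval : (∫ s in (0:ℝ)..t', -(L * ‖ζ‖ * (d + M * s)))
      = -(L * ‖ζ‖ * (d * t' + M * t'^2/2)) := by
    have hid : IntervalIntegrable (fun s : ℝ => (-(L * ‖ζ‖ * M)) * s) volume 0 t' :=
      (continuous_const.mul continuous_id).intervalIntegrable _ _
    have h1 : (fun s => -(L * ‖ζ‖ * (d + M * s)))
        = fun s => (-(L * ‖ζ‖ * d)) + (-(L * ‖ζ‖ * M)) * s := by
      funext s; ring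
    rw [h1, intervalIntegral.integral_add intervalIntegrable_const hid,
      intervalIntegral.integral_const, intervalIntegral.integral_const_mul, integral_id,
      smul_eq_mul]
    ring
  have hsplit : ⟪ζ, y - x₀⟫ = ⟪ζ, z - x₀⟫ - ∫ s in (0:ℝ)..t', ⟪ζ, w s⟫ := by
    have hcomm : (∫ s in (0:ℝ)..t', ⟪ζ, w s⟫)
        = ⟪ζ, ∫ s in (0:ℝ)..t', w s⟫ := by
      have := (innerSL ℝ ζ).intervalIntegral_comp_comm hw_int
      simpa using this
    rw [hcomm]
    have : y - x₀ = (z - x₀) - (∫ s in (0:ℝ)..t', w s) := by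
      rw [hzy]; abel
    rw [this, inner_sub_right]
  -- final numeric combination
  have hzb : ‖z - x₀‖ ≤ d + M * t' := by
    rw [hzdef, hddef]; exact habound t' ⟨ht'0, le_rfl⟩
  have pd : d^2 ≤ ε := by rw [hεdef]; nlinarith [sq_nonneg β]
  have pb : β^2 ≤ ε := by rw [hεdef]; nlinarith [sq_nonneg d]
  have ht'2 : t'^2 ≤ 2*ε := by
    have p0 : 0 ≤ (β + ε - t')*(β + ε + t') := mul_nonneg (by linarith) (by linarith)
    have p2 : ε*β ≤ ε*r := mul_le_mul_of_nonneg_left hbr.le hεnn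
    have hr2 : r^2 ≤ 1/16 := by nlinarith [hr4, hr0.le]
    have p3 : ε*ε ≤ ε*(2*r^2) := mul_le_mul_of_nonneg_left hεsmall hεnn
    have p3' : ε*(2*r^2) ≤ ε*(1/8) := mul_le_mul_of_nonneg_left (by linarith) hεnn
    have p4 : ε*r ≤ ε*(1/4) := mul_le_mul_of_nonneg_left hr4 hεnn
    have q : t'^2 ≤ (β+ε)^2 := pow_le_pow_left₀ ht'0 ht'.le 2
    have qe : (β+ε)^2 = β^2 + 2*(ε*β) + ε*ε := by ring
    rw [qe] at q
    linarith [q, pb, p2, p3, p3', p4]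
  have hmain : ⟪ζ, y - x₀⟫ ≤ σ₀ * ‖z - x₀‖^2 + L * ‖ζ‖ * (d * t' + M * t'^2/2) := by
    rw [hsplit]
    have := hIle
    rw [hIval] at this
    linarith
  have hz2 : ‖z - x₀‖^2 ≤ (2 + 4*M^2) * ε := by
    have q : ‖z - x₀‖^2 ≤ (d + M*t')^2 := pow_le_pow_left₀ (norm_nonneg _) hzb 2
    have qe : (d + M*t')^2 = d^2 + 2*(d*(M*t')) + M^2*t'^2 := by ring
    rw [qe] at q
    have s0 := sq_nonneg (d - M*t')
    have s1 : (d - M*t')^2 = d^2 - 2*(d*(M*t')) + M^2*t'^2 := by ring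
    rw [s1] at s0
    have q1 : M^2*t'^2 ≤ M^2*(2*ε) := mul_le_mul_of_nonneg_left ht'2 (sq_nonneg M)
    linarith [q, s0, q1, pd]
  have hdt : d * t' ≤ (3/2) * ε := by
    have s0 := sq_nonneg (d - t')
    have s1 : (d - t')^2 = d^2 - 2*(d*t') + t'^2 := by ring
    rw [s1] at s0
    linarith [s0, pd, ht'2]
  have hMt2 : M * t'^2/2 ≤ M * ε := by
    have := mul_le_mul_of_nonneg_left ht'2 hM.le
    linarith
  have hfinal : σ₀ * ‖z - x₀‖^2 + L * ‖ζ‖ * (d * t' + M * t'^2/2) ≤ σ * ε := by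
    have e1 : σ₀ * ‖z - x₀‖^2 ≤ σ₀ * ((2 + 4*M^2) * ε) :=
      mul_le_mul_of_nonneg_left hz2 hσ₀
    have e2 : L * ‖ζ‖ * (d * t' + M * t'^2/2) ≤ L * ‖ζ‖ * ((3/2 + M) * ε) := by
      apply mul_le_mul_of_nonneg_left _ (by positivity)
      linarith
    have e3 : 0 ≤ (‖ζ‖/r) * ε := by positivity
    rw [hσdef]
    have re : (σ₀ * (2 + 4*M^2) + L * ‖ζ‖ * (3/2 + M) + ‖ζ‖/r) * ε
        = σ₀ * ((2 + 4*M^2) * ε) + L * ‖ζ‖ * ((3/2 + M) * ε) + (‖ζ‖/r) * ε := by ring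
    rw [re]
    linarith [e1, e2, e3]
  have hεq : σ * (d^2 + β^2) = σ * ε := by rw [hεdef]
  linarith [hεq, hmain, hfinal]
end SupsetDir
section Construction

/-- squeeze criterion for continuity within a set -/
theorem continuousWithinAt_of_norm_le {E : Type*} [NormedAddCommGroup E]
    {g : ℝ → E} {φ : ℝ → ℝ} {S : Set ℝ} {s₀ : ℝ}
    (h : ∀ s ∈ S, ‖g s - g s₀‖ ≤ φ s) (hφ : ContinuousWithinAt φ S s₀) (hφ0 : φ s₀ = 0) :
    ContinuousWithinAt g S s₀ := by
  unfold ContinuousWithinAt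
  rw [Metric.tendsto_nhds]
  intro ε hε
  have h0 : Filter.Tendsto φ (nhdsWithin s₀ S) (nhds 0) := by
    have := hφ; rwa [ContinuousWithinAt, hφ0] at this
  have h1 : ∀ᶠ s in nhdsWithin s₀ S, φ s < ε := h0.eventually (eventually_lt_nhds hε)
  filter_upwards [h1, self_mem_nhdsWithin] with s hs hsS
  rw [dist_eq_norm]
  exact lt_of_le_of_lt (h s hsS) hs

/-- The Picard–Filippov iteration scheme. -/
noncomputable def filippovSeq {n : ℕ}
    (F : EuclideanSpace ℝ (Fin n) → Set (EuclideanSpace ℝ (Fin n)))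
    (x₀ v : EuclideanSpace ℝ (Fin n)) (t : ℝ) : ℕ → ℝ → EuclideanSpace ℝ (Fin n)
  | 0 => fun _ => v
  | (k+1) => fun s =>
      cproj (F (x₀ - ∫ u in s..t, filippovSeq F x₀ v t k u)) (filippovSeq F x₀ v t k s)

variable {n : ℕ} {F : EuclideanSpace ℝ (Fin n) → Set (EuclideanSpace ℝ (Fin n))}
  {K : Set (EuclideanSpace ℝ (Fin n))} {x₀ v : EuclideanSpace ℝ (Fin n)}

set_option maxHeartbeats 2000000 in
theorem filippov_props (hF : AssumptionF F) (hv : v ∈ F x₀)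
    {γ L t : ℝ} (hγ0 : 0 < γ)
    (hγ : ∀ x, ∀ u ∈ F x, ‖u‖ ≤ γ * (1 + ‖x‖)) (hL0 : 0 < L)
    (hL : ∀ p ∈ Metric.closedBall x₀ 1, ∀ q ∈ Metric.closedBall x₀ 1,
      ∀ a ∈ F p, ∃ b ∈ F q, ‖a - b‖ ≤ L * ‖p - q‖)
    (ht0 : 0 < t) (hLt : L * t ≤ 1/2) (htv : t * (‖v‖ + 1) ≤ 1/2)
    (w : ℕ → ℝ → EuclideanSpace ℝ (Fin n)) (hw0 : ∀ s, w 0 s = v)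
    (hwrec : ∀ k s, w (k+1) s = cproj (F (x₀ - ∫ u in s..t, w k u)) (w k s)) :
    ∀ k : ℕ,
      ContinuousOn (w k) (Set.Icc 0 t) ∧
      (∀ s ∈ Set.Icc (0:ℝ) t, ‖w k s - v‖ ≤ 2*L*t*‖v‖*(1 - (1/2)^k)) ∧
      (∀ s ∈ Set.Icc (0:ℝ) t, ‖w (k+1) s - w k s‖ ≤ L*t*‖v‖*(1/2)^k) ∧
      (∀ s ∈ Set.Icc (0:ℝ) t, w (k+1) s ∈ F (x₀ - ∫ u in s..t, w k u)) := by
  have hne : ∀ z, (F z).Nonempty := hF.nonempty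
  have hcv : ∀ z, Convex ℝ (F z) := hF.convex
  have hcp : ∀ z, IsComplete (F z) := fun z => (hF.compact z).isClosed.isComplete
  have hq0 : ∀ k : ℕ, (0:ℝ) < (1/2)^k := fun k => pow_pos (by norm_num) k
  have hq1 : ∀ k : ℕ, ((1/2:ℝ))^k ≤ 1 := fun k => by
    calc ((1/2:ℝ))^k ≤ 1^k := pow_le_pow_left₀ (by norm_num) (by norm_num) k
      _ = 1 := one_pow k
  have hv2 : t * ‖v‖ ≤ 1/2 := by nlinarith [norm_nonneg v, ht0]
  -- auxiliary integration facts
  have hInt : ∀ (g : ℝ → EuclideanSpace ℝ (Fin n)), ContinuousOn g (Set.Icc 0 t) →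
      ∀ s1 s2, s1 ∈ Set.Icc (0:ℝ) t → s2 ∈ Set.Icc (0:ℝ) t → s1 ≤ s2 →
      IntervalIntegrable g volume s1 s2 := by
    intro g hg s1 s2 h1 h2 h12
    apply ContinuousOn.intervalIntegrable
    apply hg.mono
    rw [Set.uIcc_of_le h12]
    exact Set.Icc_subset_Icc h1.1 h2.2
  have hIntBound : ∀ (g : ℝ → EuclideanSpace ℝ (Fin n)) (c : ℝ), 0 ≤ c →
      (∀ u ∈ Set.Icc (0:ℝ) t, ‖g u‖ ≤ c) →
      ∀ s ∈ Set.Icc (0:ℝ) t, ‖∫ u in s..t, g u‖ ≤ c * (t - s) := by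
    intro g c hc hb s hs
    have hb' : ∀ u ∈ Set.uIoc s t, ‖g u‖ ≤ c := by
      intro u hu
      rw [Set.uIoc_of_le hs.2] at hu
      exact hb u ⟨hs.1.trans hu.1.le, hu.2⟩
    have h := intervalIntegral.norm_integral_le_of_norm_le_const hb'
    rwa [abs_of_nonneg (by linarith [hs.2])] at h
  have hXball : ∀ (g : ℝ → EuclideanSpace ℝ (Fin n)),
      (∀ u ∈ Set.Icc (0:ℝ) t, ‖g u‖ ≤ 2*‖v‖) →
      ∀ s ∈ Set.Icc (0:ℝ) t, (x₀ - ∫ u in s..t, g u) ∈ Metric.closedBall x₀ 1 := by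
    intro g hgb s hs
    rw [Metric.mem_closedBall, dist_eq_norm]
    have e : x₀ - (∫ u in s..t, g u) - x₀ = -(∫ u in s..t, g u) := by abel
    rw [e, norm_neg]
    have h := hIntBound g (2*‖v‖) (by positivity) hgb s hs
    have h2 : 2*‖v‖*(t - s) ≤ 2*‖v‖*t := by
      apply mul_le_mul_of_nonneg_left _ (by positivity)
      linarith [hs.1]
    have e2 : 2*‖v‖*t = 2*(t*‖v‖) := by ring
    linarith
  have hXcont : ∀ (g : ℝ → EuclideanSpace ℝ (Fin n)), ContinuousOn g (Set.Icc 0 t) →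
      ContinuousOn (fun s => x₀ - ∫ u in s..t, g u) (Set.Icc 0 t) := by
    intro g hg
    have hint : IntervalIntegrable g volume 0 t :=
      hInt g hg 0 t ⟨le_rfl, ht0.le⟩ ⟨ht0.le, le_rfl⟩ ht0.le
    have hprim : ContinuousOn (fun s => ∫ u in (0:ℝ)..s, g u) (Set.Icc 0 t) := by
      have := intervalIntegral.continuousOn_primitive_interval' hint
        (by rw [Set.uIcc_of_le ht0.le]; exact Set.left_mem_Icc.2 ht0.le)
      rwa [Set.uIcc_of_le ht0.le] at this
    have heq : ∀ s ∈ Set.Icc (0:ℝ) t,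
        x₀ - ((∫ u in (0:ℝ)..t, g u) - ∫ u in (0:ℝ)..s, g u) = x₀ - ∫ u in s..t, g u := by
      intro s hs
      rw [intervalIntegral.integral_interval_sub_left hint
        (hInt g hg 0 s ⟨le_rfl, ht0.le⟩ hs hs.1)]
    exact (continuousOn_const.sub (continuousOn_const.sub hprim)).congr
      (fun s hs => (heq s hs).symm)
  have hXdiff : ∀ (g h : ℝ → EuclideanSpace ℝ (Fin n)), ContinuousOn g (Set.Icc 0 t) →
      ContinuousOn h (Set.Icc 0 t) → ∀ (c : ℝ), 0 ≤ c →
      (∀ u ∈ Set.Icc (0:ℝ) t, ‖g u - h u‖ ≤ c) → ∀ s ∈ Set.Icc (0:ℝ) t,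
      ‖(x₀ - ∫ u in s..t, g u) - (x₀ - ∫ u in s..t, h u)‖ ≤ c * t := by
    intro g h hgc hhc c hc hgh s hs
    have e : (x₀ - ∫ u in s..t, g u) - (x₀ - ∫ u in s..t, h u)
        = -((∫ u in s..t, g u) - ∫ u in s..t, h u) := by abel
    rw [e, norm_neg, ← intervalIntegral.integral_sub
      (hInt g hgc s t hs ⟨ht0.le, le_rfl⟩ hs.2) (hInt h hhc s t hs ⟨ht0.le, le_rfl⟩ hs.2)]
    have h1 := hIntBound (fun u => g u - h u) c hc hgh s hs
    have h2 : c*(t-s) ≤ c*t := by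
      apply mul_le_mul_of_nonneg_left _ hc
      linarith [hs.1]
    linarith
  have harith : ∀ q : ℝ, 0 < q → q ≤ 1 → 2*L*t*‖v‖*(1-q) ≤ ‖v‖ := by
    intro q hqa hqb
    have h1 : 0 ≤ L*t := by positivity
    nlinarith [norm_nonneg v, mul_nonneg (mul_nonneg h1 (norm_nonneg v)) hqa.le,
      mul_le_mul_of_nonneg_right hLt (norm_nonneg v)]
  intro k
  induction k with
  | zero =>
    have hw0c : ContinuousOn (w 0) (Set.Icc 0 t) :=
      (continuousOn_const (c := v)).congr (fun s _ => hw0 s)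
    refine ⟨hw0c, ?_, ?_, ?_⟩
    · intro s hs
      rw [hw0]
      simp
    · intro s hs
      rw [hwrec 0 s]
      have hb0 : ∀ u ∈ Set.Icc (0:ℝ) t, ‖w 0 u‖ ≤ ‖v‖ := fun u _ => by rw [hw0]
      have hX0 : ‖(x₀ - ∫ u in s..t, w 0 u) - x₀‖ ≤ t * ‖v‖ := by
        have e : x₀ - (∫ u in s..t, w 0 u) - x₀ = -(∫ u in s..t, w 0 u) := by abel
        rw [e, norm_neg]
        have h := hIntBound (w 0) ‖v‖ (norm_nonneg v) hb0 s hs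
        have h2 : ‖v‖*(t-s) ≤ t*‖v‖ := by nlinarith [hs.1, norm_nonneg v]
        linarith
      have hX0ball : (x₀ - ∫ u in s..t, w 0 u) ∈ Metric.closedBall x₀ 1 := by
        rw [Metric.mem_closedBall, dist_eq_norm]
        linarith
      obtain ⟨b, hbF, hb⟩ := hL x₀ (Metric.mem_closedBall_self (by norm_num))
        _ hX0ball v hv
      have hd : ‖cproj (F (x₀ - ∫ u in s..t, w 0 u)) (w 0 s) - w 0 s‖ ≤ ‖v - b‖ := by
        rw [norm_sub_rev, hw0]
        exact cproj_dist_le (hne _) (hcp _) (hcv _) v hbF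
      have hb2 : ‖v - b‖ ≤ L * (t * ‖v‖) := by
        have e : ‖x₀ - (x₀ - ∫ u in s..t, w 0 u)‖
            = ‖(x₀ - ∫ u in s..t, w 0 u) - x₀‖ := norm_sub_rev _ _
        calc ‖v - b‖ ≤ L * ‖x₀ - (x₀ - ∫ u in s..t, w 0 u)‖ := hb
          _ = L * ‖(x₀ - ∫ u in s..t, w 0 u) - x₀‖ := by rw [e]
          _ ≤ L * (t * ‖v‖) := mul_le_mul_of_nonneg_left hX0 hL0.le
      have e3 : L*t*‖v‖*(1/2:ℝ)^0 = L*(t*‖v‖) := by rw [pow_zero]; ring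
      rw [e3]
      linarith
    · intro s hs
      rw [hwrec 0 s]
      exact cproj_mem (hne _) (hcp _) (hcv _) _
  | succ k ih =>
    obtain ⟨ihc, ihb, ihd, ihm⟩ := ih
    have hbv : ∀ s ∈ Set.Icc (0:ℝ) t, ‖w k s - v‖ ≤ ‖v‖ :=
      fun s hs => (ihb s hs).trans (harith _ (hq0 k) (hq1 k))
    have hnormk : ∀ s ∈ Set.Icc (0:ℝ) t, ‖w k s‖ ≤ 2*‖v‖ := by
      intro s hs
      have h1 := hbv s hs
      have h2 := norm_sub_norm_le (w k s) v
      linarith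
    have hbk1 : ∀ s ∈ Set.Icc (0:ℝ) t, ‖w (k+1) s - v‖ ≤ 2*L*t*‖v‖*(1 - (1/2)^(k+1)) := by
      intro s hs
      have h1 := ihd s hs
      have h2 := ihb s hs
      have tri : ‖w (k+1) s - v‖ ≤ ‖w (k+1) s - w k s‖ + ‖w k s - v‖ :=
        norm_sub_le_norm_sub_add_norm_sub _ _ _
      have e : L*t*‖v‖*(1/2:ℝ)^k + 2*L*t*‖v‖*(1 - (1/2:ℝ)^k)
          = 2*L*t*‖v‖*(1 - (1/2:ℝ)^(k+1)) := by
        rw [pow_succ]; ring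
      linarith
    have hbv1 : ∀ s ∈ Set.Icc (0:ℝ) t, ‖w (k+1) s - v‖ ≤ ‖v‖ :=
      fun s hs => (hbk1 s hs).trans (harith _ (hq0 (k+1)) (hq1 (k+1)))
    have hnormk1 : ∀ s ∈ Set.Icc (0:ℝ) t, ‖w (k+1) s‖ ≤ 2*‖v‖ := by
      intro s hs
      have h1 := hbv1 s hs
      have h2 := norm_sub_norm_le (w (k+1) s) v
      linarith
    have hXkcont := hXcont (w k) ihc
    have hcont1 : ContinuousOn (w (k+1)) (Set.Icc 0 t) := by
      intro s₀ hs₀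
      obtain ⟨D, hD⟩ : ∃ D : ℝ, D = 2*(2*‖v‖ + γ*(1 + ‖x₀‖ + 1)) := ⟨_, rfl⟩
      have hD0 : 0 ≤ D := by rw [hD]; positivity
      have hnormF : ∀ (z : EuclideanSpace ℝ (Fin n)), z ∈ Metric.closedBall x₀ 1 →
          ∀ u ∈ F z, ‖u‖ ≤ γ*(1 + ‖x₀‖ + 1) := by
        intro z hz u hu
        have h1 : ‖z‖ ≤ ‖x₀‖ + 1 := by
          rw [Metric.mem_closedBall, dist_eq_norm] at hz
          have := norm_sub_norm_le z x₀
          linarith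
        calc ‖u‖ ≤ γ * (1 + ‖z‖) := hγ z u hu
          _ ≤ γ*(1 + ‖x₀‖ + 1) := by nlinarith
      apply continuousWithinAt_of_norm_le
        (φ := fun s => ‖w k s - w k s₀‖ + Real.sqrt
          (L * ‖(x₀ - ∫ u in s..t, w k u) - (x₀ - ∫ u in s₀..t, w k u)‖ * D))
      · intro s hs
        rw [hwrec k s, hwrec k s₀]
        have hXs := hXball (w k) hnormk s hs
        have hXs₀ := hXball (w k) hnormk s₀ hs₀
        have hδ0 : 0 ≤ L * ‖(x₀ - ∫ u in s..t, w k u) - (x₀ - ∫ u in s₀..t, w k u)‖ := by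
          positivity
        have h1 : ∃ b ∈ F (x₀ - ∫ u in s₀..t, w k u),
            ‖cproj (F (x₀ - ∫ u in s..t, w k u)) (w k s₀) - b‖ ≤
              L * ‖(x₀ - ∫ u in s..t, w k u) - (x₀ - ∫ u in s₀..t, w k u)‖ :=
          hL _ hXs _ hXs₀ _ (cproj_mem (hne _) (hcp _) (hcv _) _)
        have h2 : ∃ a ∈ F (x₀ - ∫ u in s..t, w k u),
            ‖cproj (F (x₀ - ∫ u in s₀..t, w k u)) (w k s₀) - a‖ ≤
              L * ‖(x₀ - ∫ u in s..t, w k u) - (x₀ - ∫ u in s₀..t, w k u)‖ := by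
          obtain ⟨a, haF, ha⟩ :=
            hL _ hXs₀ _ hXs _ (cproj_mem (hne _) (hcp _) (hcv _) (u := w k s₀))
          refine ⟨a, haF, ?_⟩
          rwa [norm_sub_rev (x₀ - ∫ u in s₀..t, w k u)] at ha
        have hest := cproj_est (hne _) (hcp _) (hcv _) (hne _) (hcp _) (hcv _)
          (w k s) (w k s₀) hδ0 h1 h2
        have hsum : ‖w k s₀ - cproj (F (x₀ - ∫ u in s..t, w k u)) (w k s₀)‖ +
            ‖w k s₀ - cproj (F (x₀ - ∫ u in s₀..t, w k u)) (w k s₀)‖ ≤ D := by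
          have n1 : ‖cproj (F (x₀ - ∫ u in s..t, w k u)) (w k s₀)‖ ≤ γ*(1 + ‖x₀‖ + 1) :=
            hnormF _ hXs _ (cproj_mem (hne _) (hcp _) (hcv _) _)
          have n2 : ‖cproj (F (x₀ - ∫ u in s₀..t, w k u)) (w k s₀)‖ ≤ γ*(1 + ‖x₀‖ + 1) :=
            hnormF _ hXs₀ _ (cproj_mem (hne _) (hcp _) (hcv _) _)
          have n3 := hnormk s₀ hs₀
          have t1 := norm_sub_le (w k s₀) (cproj (F (x₀ - ∫ u in s..t, w k u)) (w k s₀))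
          have t2 := norm_sub_le (w k s₀) (cproj (F (x₀ - ∫ u in s₀..t, w k u)) (w k s₀))
          rw [hD]
          linarith
        have hsqrt : Real.sqrt
            (L * ‖(x₀ - ∫ u in s..t, w k u) - (x₀ - ∫ u in s₀..t, w k u)‖ *
              (‖w k s₀ - cproj (F (x₀ - ∫ u in s..t, w k u)) (w k s₀)‖ +
               ‖w k s₀ - cproj (F (x₀ - ∫ u in s₀..t, w k u)) (w k s₀)‖)) ≤
            Real.sqrt
            (L * ‖(x₀ - ∫ u in s..t, w k u) - (x₀ - ∫ u in s₀..t, w k u)‖ * D) :=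
          Real.sqrt_le_sqrt (mul_le_mul_of_nonneg_left hsum hδ0)
        linarith [hest, hsqrt]
      · have c1 : ContinuousWithinAt (fun s => ‖w k s - w k s₀‖) (Set.Icc 0 t) s₀ :=
          ((ihc s₀ hs₀).sub continuousWithinAt_const).norm
        have c2 : ContinuousWithinAt
            (fun s => L * ‖(x₀ - ∫ u in s..t, w k u) - (x₀ - ∫ u in s₀..t, w k u)‖ * D)
            (Set.Icc 0 t) s₀ :=
          (((hXkcont s₀ hs₀).sub continuousWithinAt_const).norm.const_mul L).mul_const D
        exact c1.add (Real.continuous_sqrt.continuousAt.comp_continuousWithinAt c2)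
      · simp
    have hmem1 : ∀ s ∈ Set.Icc (0:ℝ) t, w (k+2) s ∈ F (x₀ - ∫ u in s..t, w (k+1) u) := by
      intro s hs
      rw [hwrec (k+1) s]
      exact cproj_mem (hne _) (hcp _) (hcv _) _
    have hdiff1 : ∀ s ∈ Set.Icc (0:ℝ) t,
        ‖w (k+2) s - w (k+1) s‖ ≤ L*t*‖v‖*(1/2)^(k+1) := by
      intro s hs
      rw [hwrec (k+1) s]
      have hXk1ball := hXball (w (k+1)) hnormk1 s hs
      have hXkball := hXball (w k) hnormk s hs
      obtain ⟨b, hbF, hb⟩ := hL _ hXkball _ hXk1ball _ (ihm s hs)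
      have hd1 : ‖cproj (F (x₀ - ∫ u in s..t, w (k+1) u)) (w (k+1) s) - w (k+1) s‖ ≤
          ‖w (k+1) s - b‖ := by
        rw [norm_sub_rev]
        exact cproj_dist_le (hne _) (hcp _) (hcv _) _ hbF
      have hXd : ‖(x₀ - ∫ u in s..t, w k u) - (x₀ - ∫ u in s..t, w (k+1) u)‖ ≤
          (L*t*‖v‖*(1/2)^k) * t := by
        apply hXdiff (w k) (w (k+1)) ihc hcont1 _ (by positivity) _ s hs
        intro u hu
        rw [norm_sub_rev]
        exact ihd u hu
      have e2 : L*((L*t*‖v‖*(1/2:ℝ)^k)*t) = (L*t)*(L*t*‖v‖*(1/2:ℝ)^k) := by ring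
      have h2 : (L*t)*(L*t*‖v‖*(1/2:ℝ)^k) ≤ (1/2)*(L*t*‖v‖*(1/2:ℝ)^k) :=
        mul_le_mul_of_nonneg_right hLt (by positivity)
      have e3 : L*t*‖v‖*(1/2:ℝ)^(k+1) = (1/2)*(L*t*‖v‖*(1/2:ℝ)^k) := by
        rw [pow_succ]; ring
      calc ‖cproj (F (x₀ - ∫ u in s..t, w (k+1) u)) (w (k+1) s) - w (k+1) s‖
          ≤ ‖w (k+1) s - b‖ := hd1
        _ ≤ L * ‖(x₀ - ∫ u in s..t, w k u) - (x₀ - ∫ u in s..t, w (k+1) u)‖ := hb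
        _ ≤ L * ((L*t*‖v‖*(1/2)^k) * t) := mul_le_mul_of_nonneg_left hXd hL0.le
        _ ≤ L*t*‖v‖*(1/2)^(k+1) := by rw [e3, e2]; exact h2
    exact ⟨hcont1, hbk1, hdiff1, hmem1⟩

end Construction
section Reach

variable {n : ℕ} {F : EuclideanSpace ℝ (Fin n) → Set (EuclideanSpace ℝ (Fin n))}
  {K : Set (EuclideanSpace ℝ (Fin n))} {x₀ v : EuclideanSpace ℝ (Fin n)}

set_option maxHeartbeats 2000000 in
theorem filippov_reach (hF : AssumptionF F) (hx₀K : x₀ ∈ K) (hv : v ∈ F x₀)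
    {γ L t : ℝ} (hγ0 : 0 < γ)
    (hγ : ∀ x, ∀ u ∈ F x, ‖u‖ ≤ γ * (1 + ‖x‖)) (hL0 : 0 < L)
    (hL : ∀ p ∈ Metric.closedBall x₀ 1, ∀ q ∈ Metric.closedBall x₀ 1,
      ∀ a ∈ F p, ∃ b ∈ F q, ‖a - b‖ ≤ L * ‖p - q‖)
    (ht0 : 0 < t) (hLt : L * t ≤ 1/2) (htv : t * (‖v‖ + 1) ≤ 1/2) :
    ∃ y, t ∈ reachTimes F K y ∧ ‖(y - x₀) + t • v‖ ≤ 2*L*t^2*‖v‖ ∧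
      ‖y - x₀‖ ≤ 2*t*‖v‖ := by
  obtain ⟨w, hwdef⟩ : ∃ w, w = filippovSeq F x₀ v t := ⟨_, rfl⟩
  have hw0 : ∀ s, w 0 s = v := fun s => by rw [hwdef]; rfl
  have hwrec : ∀ k s, w (k+1) s = cproj (F (x₀ - ∫ u in s..t, w k u)) (w k s) :=
    fun k s => by rw [hwdef]; rfl
  have props := filippov_props hF hv hγ0 hγ hL0 hL ht0 hLt htv w hw0 hwrec
  have hne : ∀ z, (F z).Nonempty := hF.nonempty
  have hv2 : t * ‖v‖ ≤ 1/2 := by nlinarith [norm_nonneg v, ht0]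
  have hq0 : ∀ k : ℕ, (0:ℝ) < (1/2)^k := fun k => pow_pos (by norm_num) k
  have hq1 : ∀ k : ℕ, ((1/2:ℝ))^k ≤ 1 := fun k => by
    calc ((1/2:ℝ))^k ≤ 1^k := pow_le_pow_left₀ (by norm_num) (by norm_num) k
      _ = 1 := one_pow k
  have hInt : ∀ (g : ℝ → EuclideanSpace ℝ (Fin n)), ContinuousOn g (Set.Icc 0 t) →
      ∀ s1 s2, s1 ∈ Set.Icc (0:ℝ) t → s2 ∈ Set.Icc (0:ℝ) t → s1 ≤ s2 →
      IntervalIntegrable g volume s1 s2 := by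
    intro g hg s1 s2 h1 h2 h12
    apply ContinuousOn.intervalIntegrable
    apply hg.mono
    rw [Set.uIcc_of_le h12]
    exact Set.Icc_subset_Icc h1.1 h2.2
  have hIntBound : ∀ (g : ℝ → EuclideanSpace ℝ (Fin n)) (c : ℝ), 0 ≤ c →
      (∀ u ∈ Set.Icc (0:ℝ) t, ‖g u‖ ≤ c) →
      ∀ s ∈ Set.Icc (0:ℝ) t, ‖∫ u in s..t, g u‖ ≤ c * (t - s) := by
    intro g c hc hb s hs
    have hb' : ∀ u ∈ Set.uIoc s t, ‖g u‖ ≤ c := by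
      intro u hu
      rw [Set.uIoc_of_le hs.2] at hu
      exact hb u ⟨hs.1.trans hu.1.le, hu.2⟩
    have h := intervalIntegral.norm_integral_le_of_norm_le_const hb'
    rwa [abs_of_nonneg (by linarith [hs.2])] at h
  -- uniform bounds on the iterates
  have hbk : ∀ k, ∀ s ∈ Set.Icc (0:ℝ) t, ‖w k s - v‖ ≤ 2*(L*t*‖v‖) := by
    intro k s hs
    have h1 := (props k).2.1 s hs
    have h2 : 2*L*t*‖v‖*(1 - (1/2:ℝ)^k) ≤ 2*L*t*‖v‖ := by
      have hb : 0 ≤ 2*L*t*‖v‖ := by positivity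
      nlinarith [hq0 k]
    nlinarith [h1, h2]
  have hnormk : ∀ k, ∀ s ∈ Set.Icc (0:ℝ) t, ‖w k s‖ ≤ 2*‖v‖ := by
    intro k s hs
    have h1 := hbk k s hs
    have h2 := norm_sub_norm_le (w k s) v
    nlinarith [norm_nonneg v]
  have hd : ∀ s ∈ Set.Icc (0:ℝ) t, ∀ k,
      dist (w k s) (w (k+1) s) ≤ (L*t*‖v‖) * (1/2:ℝ)^k := by
    intro s hs k
    rw [dist_eq_norm, norm_sub_rev]
    exact (props k).2.2.1 s hs
  have hcauchy : ∀ s ∈ Set.Icc (0:ℝ) t, CauchySeq (fun k => w k s) :=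
    fun s hs => cauchySeq_of_le_geometric (1/2) (L*t*‖v‖) (by norm_num) (hd s hs)
  obtain ⟨wlim, hwlim⟩ : ∃ wl : ℝ → EuclideanSpace ℝ (Fin n),
      wl = fun s => Filter.limUnder Filter.atTop (fun k => w k s) := ⟨_, rfl⟩
  have htend : ∀ s ∈ Set.Icc (0:ℝ) t,
      Filter.Tendsto (fun k => w k s) Filter.atTop (nhds (wlim s)) := by
    intro s hs
    rw [hwlim]
    exact (hcauchy s hs).tendsto_limUnder
  have hgeom : ∀ s ∈ Set.Icc (0:ℝ) t, ∀ k,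
      ‖w k s - wlim s‖ ≤ 2*(L*t*‖v‖)*(1/2:ℝ)^k := by
    intro s hs k
    have h := dist_le_of_le_geometric_of_tendsto (1/2) (L*t*‖v‖) (by norm_num)
      (hd s hs) (htend s hs) k
    rw [dist_eq_norm] at h
    have e : (L*t*‖v‖) * (1/2:ℝ)^k / (1 - 1/2) = 2*((L*t*‖v‖)*(1/2:ℝ)^k) := by
      rw [show (1:ℝ) - 1/2 = 1/2 by norm_num]
      ring
    rw [e] at h
    linarith [h]
  have hlimv : ∀ s ∈ Set.Icc (0:ℝ) t, ‖wlim s - v‖ ≤ 2*(L*t*‖v‖) := by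
    intro s hs
    have h := hgeom s hs 0
    rw [hw0 s] at h
    rw [norm_sub_rev]
    simpa using h
  have hnormlim : ∀ s ∈ Set.Icc (0:ℝ) t, ‖wlim s‖ ≤ 2*‖v‖ := by
    intro s hs
    have h1 := hlimv s hs
    have h2 := norm_sub_norm_le (wlim s) v
    nlinarith [norm_nonneg v]
  -- continuity of the limit
  have hctends : ∀ (c : ℝ), Filter.Tendsto (fun k : ℕ => c*(1/2:ℝ)^k)
      Filter.atTop (nhds 0) := by
    intro c
    have h := tendsto_pow_atTop_nhds_zero_of_lt_one
      (show (0:ℝ) ≤ 1/2 by norm_num) (show (1/2:ℝ) < 1 by norm_num)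
    have h2 := h.const_mul c
    simpa using h2
  have hunif : TendstoUniformlyOn (fun k s => w k s) wlim Filter.atTop (Set.Icc 0 t) := by
    rw [Metric.tendstoUniformlyOn_iff]
    intro ε hε
    have h1 : ∀ᶠ k : ℕ in Filter.atTop, 2*(L*t*‖v‖)*(1/2:ℝ)^k < ε :=
      (hctends (2*(L*t*‖v‖))).eventually (eventually_lt_nhds hε)
    filter_upwards [h1] with k hk s hs
    rw [dist_comm, dist_eq_norm]
    exact lt_of_le_of_lt (hgeom s hs k) hk
  have hcontlim : ContinuousOn wlim (Set.Icc 0 t) :=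
    hunif.continuousOn (Filter.Frequently.of_forall fun k => (props k).1)
  have hwlimint : IntervalIntegrable wlim volume 0 t :=
    hInt wlim hcontlim 0 t ⟨le_rfl, ht0.le⟩ ⟨ht0.le, le_rfl⟩ ht0.le
  obtain ⟨y, hy⟩ : ∃ y, y = x₀ - ∫ u in (0:ℝ)..t, wlim u := ⟨_, rfl⟩
  obtain ⟨Xf, hXf⟩ : ∃ Xf : ℝ → EuclideanSpace ℝ (Fin n),
      Xf = fun s => x₀ - ∫ u in s..t, wlim u := ⟨_, rfl⟩
  have hXs : ∀ s ∈ Set.Icc (0:ℝ) t, Xf s = y + ∫ u in (0:ℝ)..s, wlim u := by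
    intro s hs
    simp only [hXf]
    rw [hy]
    have h := intervalIntegral.integral_interval_sub_left hwlimint
      (hInt wlim hcontlim 0 s ⟨le_rfl, ht0.le⟩ hs hs.1)
    rw [← h]
    abel
  -- balls
  have hXfball : ∀ s ∈ Set.Icc (0:ℝ) t, Xf s ∈ Metric.closedBall x₀ 1 := by
    intro s hs
    simp only [hXf]
    rw [Metric.mem_closedBall, dist_eq_norm]
    have e : x₀ - (∫ u in s..t, wlim u) - x₀ = -(∫ u in s..t, wlim u) := by abel
    rw [e, norm_neg]
    have h := hIntBound wlim (2*‖v‖) (by positivity) hnormlim s hs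
    nlinarith [hs.1, norm_nonneg v]
  have hXkball : ∀ k, ∀ s ∈ Set.Icc (0:ℝ) t,
      (x₀ - ∫ u in s..t, w k u) ∈ Metric.closedBall x₀ 1 := by
    intro k s hs
    rw [Metric.mem_closedBall, dist_eq_norm]
    have e : x₀ - (∫ u in s..t, w k u) - x₀ = -(∫ u in s..t, w k u) := by abel
    rw [e, norm_neg]
    have h := hIntBound (w k) (2*‖v‖) (by positivity) (hnormk k) s hs
    nlinarith [hs.1, norm_nonneg v]
  -- membership of the limit velocity
  have hmem : ∀ s ∈ Set.Icc (0:ℝ) t, wlim s ∈ F (Xf s) := by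
    intro s hs
    have hclosed : IsClosed (F (Xf s)) := (hF.compact _).isClosed
    have hbound : ∀ k : ℕ, Metric.infDist (wlim s) (F (Xf s)) ≤
        (2*(L*t*‖v‖) + L*(2*(L*t*‖v‖)*t))*(1/2:ℝ)^k := by
      intro k
      obtain ⟨b, hbF, hb⟩ := hL _ (hXkball k s hs) _ (hXfball s hs)
        _ ((props k).2.2.2 s hs)
      have hXd : ‖(x₀ - ∫ u in s..t, w k u) - Xf s‖ ≤ (2*(L*t*‖v‖)*(1/2:ℝ)^k) * (t - s) := by
        simp only [hXf]
        have e : (x₀ - ∫ u in s..t, w k u) - (x₀ - ∫ u in s..t, wlim u)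
            = -((∫ u in s..t, w k u) - ∫ u in s..t, wlim u) := by abel
        rw [e, norm_neg, ← intervalIntegral.integral_sub
          (hInt (w k) (props k).1 s t hs ⟨ht0.le, le_rfl⟩ hs.2)
          (hInt wlim hcontlim s t hs ⟨ht0.le, le_rfl⟩ hs.2)]
        exact hIntBound (fun u => w k u - wlim u) _ (by positivity)
          (fun u hu => hgeom u hu k) s hs
      have h1 : Metric.infDist (wlim s) (F (Xf s)) ≤ dist (wlim s) b :=
        Metric.infDist_le_dist_of_mem hbF
      have h2 : dist (wlim s) b ≤ ‖wlim s - w (k+1) s‖ + ‖w (k+1) s - b‖ := by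
        rw [dist_eq_norm]
        exact norm_sub_le_norm_sub_add_norm_sub _ _ _
      have h3 : ‖wlim s - w (k+1) s‖ ≤ 2*(L*t*‖v‖)*(1/2:ℝ)^k := by
        rw [norm_sub_rev]
        have := hgeom s hs (k+1)
        have e : 2*(L*t*‖v‖)*(1/2:ℝ)^(k+1) ≤ 2*(L*t*‖v‖)*(1/2:ℝ)^k := by
          have hbn : 0 ≤ 2*(L*t*‖v‖) := by positivity
          have : (1/2:ℝ)^(k+1) ≤ (1/2:ℝ)^k := by
            rw [pow_succ]
            nlinarith [hq0 k]
          nlinarith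
        linarith
      have h4 : ‖w (k+1) s - b‖ ≤ L*(2*(L*t*‖v‖)*t)*(1/2:ℝ)^k := by
        have e1 : ‖w (k+1) s - b‖ ≤ L * ‖(x₀ - ∫ u in s..t, w k u) - Xf s‖ := hb
        have e2 : L * ‖(x₀ - ∫ u in s..t, w k u) - Xf s‖ ≤
            L * ((2*(L*t*‖v‖)*(1/2:ℝ)^k) * (t - s)) :=
          mul_le_mul_of_nonneg_left hXd hL0.le
        have e3 : L * ((2*(L*t*‖v‖)*(1/2:ℝ)^k) * (t - s)) ≤
            L * ((2*(L*t*‖v‖)*(1/2:ℝ)^k) * t) := by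
          apply mul_le_mul_of_nonneg_left _ hL0.le
          apply mul_le_mul_of_nonneg_left _ (by positivity)
          linarith [hs.1]
        have e4 : L * ((2*(L*t*‖v‖)*(1/2:ℝ)^k) * t) = L*(2*(L*t*‖v‖)*t)*(1/2:ℝ)^k := by
          ring
        linarith [e1, e2, e3, e4.le, e4.ge]
      have efin : (2*(L*t*‖v‖) + L*(2*(L*t*‖v‖)*t))*(1/2:ℝ)^k
          = 2*(L*t*‖v‖)*(1/2:ℝ)^k + L*(2*(L*t*‖v‖)*t)*(1/2:ℝ)^k := by ring
      rw [efin]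
      linarith [h1, h2, h3, h4]
    have hto := hctends (2*(L*t*‖v‖) + L*(2*(L*t*‖v‖)*t))
    have hle : Metric.infDist (wlim s) (F (Xf s)) ≤ 0 :=
      ge_of_tendsto hto (Filter.Eventually.of_forall hbound)
    have heq : Metric.infDist (wlim s) (F (Xf s)) = 0 :=
      le_antisymm hle Metric.infDist_nonneg
    exact (hclosed.mem_iff_infDist_zero (hne _)).2 heq
  -- the trajectory
  have htraj : IsTrajectory F y t Xf := by
    refine ⟨?_, wlim, hwlimint, ?_, hXs⟩
    · simp only [hXf]
      rw [hy]
    · rw [ae_restrict_iff' measurableSet_Ioc]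
      exact Filter.Eventually.of_forall fun s hs => hmem s ⟨hs.1.le, hs.2⟩
  have hreach : t ∈ reachTimes F K y := by
    refine ⟨ht0.le, Xf, htraj, ?_⟩
    simp only [hXf]
    simp only [intervalIntegral.integral_same, sub_zero]
    exact hx₀K
  refine ⟨y, hreach, ?_, ?_⟩
  · -- ‖(y - x₀) + t • v‖ ≤ 2 L t² ‖v‖
    have h1 : (∫ _ in (0:ℝ)..t, v) = t • v := by
      rw [intervalIntegral.integral_const, sub_zero]
    have h2 : (∫ u in (0:ℝ)..t, (v - wlim u)) = t • v - ∫ u in (0:ℝ)..t, wlim u := by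
      rw [intervalIntegral.integral_sub intervalIntegrable_const hwlimint, h1]
    have e : y - x₀ + t • v = ∫ u in (0:ℝ)..t, (v - wlim u) := by
      rw [h2, hy]; abel
    rw [e]
    have hb := hIntBound (fun u => v - wlim u) (2*(L*t*‖v‖)) (by positivity)
      (fun u hu => by rw [norm_sub_rev]; exact hlimv u hu) 0 ⟨le_rfl, ht0.le⟩
    have e2 : 2*(L*t*‖v‖)*(t-0) = 2*L*t^2*‖v‖ := by ring
    linarith [hb, e2.le, e2.ge]
  · -- ‖y - x₀‖ ≤ 2 t ‖v‖
    rw [hy]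
    have e : x₀ - (∫ u in (0:ℝ)..t, wlim u) - x₀ = -(∫ u in (0:ℝ)..t, wlim u) := by abel
    rw [e, norm_neg]
    have hb := hIntBound wlim (2*‖v‖) (by positivity) hnormlim 0 ⟨le_rfl, ht0.le⟩
    have e2 : 2*‖v‖*(t-0) = 2*t*‖v‖ := by ring
    linarith [hb, e2.le, e2.ge]

end Reach
section Final

variable {n : ℕ} {F : EuclideanSpace ℝ (Fin n) → Set (EuclideanSpace ℝ (Fin n))}
  {K : Set (EuclideanSpace ℝ (Fin n))} {x₀ ζ : EuclideanSpace ℝ (Fin n)}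

set_option maxHeartbeats 1000000 in
theorem minHam_nonneg (hF : AssumptionF F) (hx₀ : x₀ ∈ K)
    (hζ : IsProxNormalEpi F K x₀ ζ 0) : 0 ≤ minHam F x₀ ζ := by
  obtain ⟨σ, hσ0, hσ⟩ := hζ
  have himg : ((fun v => ⟪v, ζ⟫) '' F x₀).Nonempty := (hF.nonempty x₀).image _
  apply le_csInf himg
  rintro b ⟨v, hv, rfl⟩
  by_contra hneg
  push_neg at hneg
  obtain ⟨p, hpdef⟩ : ∃ p : ℝ, p = -⟪v, ζ⟫ := ⟨_, rfl⟩
  have hp0 : 0 < p := by rw [hpdef]; linarith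
  obtain ⟨L, hL0, hL⟩ := hF.locLip (Metric.closedBall x₀ 1) (isCompact_closedBall _ _)
  obtain ⟨γ, hγ0, hγ⟩ := hF.growth
  obtain ⟨c, hcdef⟩ : ∃ c : ℝ, c = σ*(4*‖v‖^2+1) + 2*L*‖v‖*‖ζ‖ := ⟨_, rfl⟩
  have hc0 : 0 ≤ c := by rw [hcdef]; positivity
  obtain ⟨t, htdef⟩ : ∃ t : ℝ,
      t = min (min (1/(2*L)) (1/(2*(‖v‖+1)))) (p/(c+1)) := ⟨_, rfl⟩
  have ht0 : 0 < t := by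
    rw [htdef]
    apply lt_min (lt_min _ _) _ <;> positivity
  have hLt : L*t ≤ 1/2 := by
    have h1 : t ≤ 1/(2*L) := by
      rw [htdef]; exact le_trans (min_le_left _ _) (min_le_left _ _)
    have h2 : L*t ≤ L*(1/(2*L)) := mul_le_mul_of_nonneg_left h1 hL0.le
    have e : L*(1/(2*L)) = 1/2 := by field_simp; try ring
    linarith
  have htv : t*(‖v‖+1) ≤ 1/2 := by
    have h1 : t ≤ 1/(2*(‖v‖+1)) := by
      rw [htdef]; exact le_trans (min_le_left _ _) (min_le_right _ _)
    have hv1 : (0:ℝ) < ‖v‖+1 := by positivity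
    have h2 : t*(‖v‖+1) ≤ (1/(2*(‖v‖+1)))*(‖v‖+1) :=
      mul_le_mul_of_nonneg_right h1 hv1.le
    have e : (1/(2*(‖v‖+1)))*(‖v‖+1) = 1/2 := by field_simp; try ring
    linarith
  have htp : t ≤ p/(c+1) := by rw [htdef]; exact min_le_right _ _
  obtain ⟨y, hreach, hest1, hest2⟩ :=
    filippov_reach hF hx₀ hv hγ0 (fun x u hu => hγ x u hu) hL0 hL ht0 hLt htv
  have hmemE : memEpi F K y t := ⟨ht0.le, sInf_le ⟨t, hreach, rfl⟩⟩
  have hineq := hσ y t hmemE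
  rw [minTime_eq_zero hx₀] at hineq
  simp only [ENNReal.toReal_zero, sub_zero, zero_mul, add_zero, sq_abs] at hineq
  have hsplit : ⟪ζ, y - x₀⟫ = ⟪ζ, (y - x₀) + t•v⟫ - t*⟪ζ, v⟫ := by
    rw [inner_add_right, real_inner_smul_right]
    ring
  have h1 : -(‖ζ‖*‖(y - x₀) + t•v‖) ≤ ⟪ζ, (y - x₀) + t•v⟫ := by
    have ha := abs_real_inner_le_norm ζ ((y - x₀) + t•v)
    have hb := neg_abs_le ⟪ζ, (y - x₀) + t•v⟫
    linarith
  have h2 : ‖ζ‖*‖(y - x₀) + t•v‖ ≤ ‖ζ‖*(2*L*t^2*‖v‖) :=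
    mul_le_mul_of_nonneg_left hest1 (norm_nonneg ζ)
  have hy2 : ‖y - x₀‖^2 ≤ 4*t^2*‖v‖^2 := by
    have q := pow_le_pow_left₀ (norm_nonneg (y - x₀)) hest2 2
    have e : (2*t*‖v‖)^2 = 4*t^2*‖v‖^2 := by ring
    linarith
  have hcomm : ⟪ζ, v⟫ = ⟪v, ζ⟫ := real_inner_comm _ _
  have hkey : p*t ≤ t^2*c := by
    rw [hpdef, hcdef]
    have hA : -(t*⟪ζ,v⟫) ≤ σ*(‖y-x₀‖^2 + t^2) + ‖ζ‖*(2*L*t^2*‖v‖) := by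
      have hh := hineq
      rw [hsplit] at hh
      linarith
    have hB : σ*(‖y-x₀‖^2 + t^2) ≤ σ*(4*t^2*‖v‖^2 + t^2) :=
      mul_le_mul_of_nonneg_left (by linarith) hσ0
    have e : σ*(4*t^2*‖v‖^2 + t^2) + ‖ζ‖*(2*L*t^2*‖v‖)
        = t^2*(σ*(4*‖v‖^2+1) + 2*L*‖v‖*‖ζ‖) := by ring
    have e2 : -⟪v,ζ⟫*t = -(t*⟪ζ,v⟫) := by rw [hcomm]; ring
    linarith [hA, hB, e.le, e.ge, e2.le, e2.ge]
  have hptc : p ≤ t*c := by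
    have e : t^2*c = t*(t*c) := by ring
    rw [e] at hkey
    nlinarith [ht0, hkey]
  have hfin : t*c ≤ (p/(c+1))*c := mul_le_mul_of_nonneg_right htp hc0
  have hlt : (p/(c+1))*c < p := by
    rw [div_mul_eq_mul_div, div_lt_iff₀ (by positivity)]
    nlinarith [hp0, hc0]
  linarith

end Final

/-- for `x₀` in the target, `∂^∞𝒯(x₀) = N^P_K(x₀) ∩ {ζ : h(x₀,ζ) ≥ 0}`. -/
theorem horizSubdiff_eq_target {n : ℕ}
    (F : EuclideanSpace ℝ (Fin n) → Set (EuclideanSpace ℝ (Fin n)))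
    (K : Set (EuclideanSpace ℝ (Fin n))) (hF : AssumptionF F) (hK : IsClosed K)
    (x₀ : EuclideanSpace ℝ (Fin n)) (hx₀ : x₀ ∈ K) :
    horizSubdiff F K x₀ = {ζ | IsProxNormal K x₀ ζ ∧ 0 ≤ minHam F x₀ ζ} := by
  ext ζ
  simp only [horizSubdiff, Set.mem_setOf_eq]
  constructor
  · intro hζ
    refine ⟨?_, minHam_nonneg hF hx₀ hζ⟩
    obtain ⟨σ, hσ0, hσ⟩ := hζ
    refine ⟨σ, hσ0, ?_⟩
    intro y hy
    have hmemE : memEpi F K y 0 := ⟨le_rfl, by rw [minTime_eq_zero hy]; exact zero_le⟩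
    have h := hσ y 0 hmemE
    rw [minTime_eq_zero hx₀] at h
    simpa using h
  · rintro ⟨hN, hh⟩
    exact horiz_of_prox hF hx₀ hN hh
end

section
/- Assume (F). Let x₀ ∈ R \ K, where R is the reachable set, and let ζ ∈ N^P_{R(T(x₀))}(x₀), where R(r) = {y : T(y) ≤ r} is the sublevel set of the minimum time function. Then h(x₀, ζ) ≤ 0. -/
open scoped RealInnerProductSpace ENNReal
open MeasureTheory Set

private lemma minTime_le_of_traj {n : ℕ}
    {F : EuclideanSpace ℝ (Fin n) → Set (EuclideanSpace ℝ (Fin n))}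
    {K : Set (EuclideanSpace ℝ (Fin n))} {x₀ : EuclideanSpace ℝ (Fin n)} {T s : ℝ}
    {x : ℝ → EuclideanSpace ℝ (Fin n)} (hT : IsTrajectory F x₀ T x) (hxK : x T ∈ K)
    (hs0 : 0 ≤ s) (hsT : s ≤ T) : minTime F K (x s) ≤ ENNReal.ofReal (T - s) := by
  obtain ⟨hx0, v, hvi, hvF, hxint⟩ := hT
  have hT0 : (0:ℝ) ≤ T := hs0.trans hsT
  have hsub1 : Set.uIcc s T ⊆ Set.uIcc 0 T := by
    rw [Set.uIcc_of_le hsT, Set.uIcc_of_le hT0]; exact Set.Icc_subset_Icc hs0 le_rfl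
  have hmem : (T - s) ∈ reachTimes F K (x s) := by
    refine ⟨by linarith, fun u => x (s + u), ⟨by simp, fun u => v (s + u), ?_, ?_, ?_⟩, ?_⟩
    · have h1 : IntervalIntegrable v volume s T := hvi.mono_set hsub1
      simpa using h1.comp_add_left s
    · rw [MeasureTheory.ae_restrict_iff' measurableSet_Ioc]
      have h2 : ∀ᵐ t ∂volume, t ∈ Set.Ioc (0:ℝ) T → v t ∈ F (x t) :=
        (MeasureTheory.ae_restrict_iff' measurableSet_Ioc).mp hvF
      rw [MeasureTheory.ae_iff] at h2 ⊢
      have hpre : {u : ℝ | ¬ (u ∈ Set.Ioc (0:ℝ) (T - s) → v (s + u) ∈ F (x (s + u)))}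
          ⊆ (fun u => s + u) ⁻¹' {t : ℝ | ¬ (t ∈ Set.Ioc (0:ℝ) T → v t ∈ F (x t))} := by
        intro u hu
        simp only [Set.mem_setOf_eq, Classical.not_imp, Set.mem_preimage, Set.mem_Ioc] at hu ⊢
        exact ⟨⟨by linarith [hu.1.1], by linarith [hu.1.2]⟩, hu.2⟩
      exact measure_mono_null hpre (by rw [measure_preimage_add]; exact h2)
    · intro u hu
      have hsu : s + u ∈ Set.Icc 0 T := ⟨by linarith [hu.1], by linarith [hu.2]⟩
      have hint1 : IntervalIntegrable v volume 0 s := hvi.mono_set (by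
        rw [Set.uIcc_of_le hs0, Set.uIcc_of_le hT0]; exact Set.Icc_subset_Icc le_rfl hsT)
      have hint2 : IntervalIntegrable v volume s (s + u) := hvi.mono_set (by
        rw [Set.uIcc_of_le (by linarith [hu.1] : s ≤ s + u), Set.uIcc_of_le hT0]
        exact Set.Icc_subset_Icc hs0 hsu.2)
      show x (s + u) = x s + ∫ r in (0:ℝ)..u, v (s + r)
      rw [hxint (s + u) hsu, hxint s ⟨hs0, hsT⟩,
        intervalIntegral.integral_comp_add_left (fun r => v r) s, add_zero,
        ← intervalIntegral.integral_add_adjacent_intervals hint1 hint2, add_assoc]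
    · have h3 : s + (T - s) = T := by ring
      show x (s + (T - s)) ∈ K
      rw [h3]; exact hxK
  exact sInf_le (Set.mem_image_of_mem _ hmem)

private lemma traj_norm_bound {n : ℕ}
    {F : EuclideanSpace ℝ (Fin n) → Set (EuclideanSpace ℝ (Fin n))}
    {x₀ : EuclideanSpace ℝ (Fin n)} {T : ℝ} {x v : ℝ → EuclideanSpace ℝ (Fin n)} {γ : ℝ}
    (hγ : 0 < γ) (hgrow : ∀ y, ∀ w ∈ F y, ‖w‖ ≤ γ * (1 + ‖y‖))
    (hvi : IntervalIntegrable v volume 0 T)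
    (hvF : ∀ᵐ t ∂(volume.restrict (Set.Ioc (0:ℝ) T)), v t ∈ F (x t))
    (hxint : ∀ t ∈ Set.Icc (0:ℝ) T, x t = x₀ + ∫ r in (0:ℝ)..t, v r)
    {s : ℝ} (hs0 : 0 ≤ s) (hsT : s ≤ T) (hsmall : γ * (2 + ‖x₀‖) * s ≤ 1/2) :
    ∀ u ∈ Set.Icc (0:ℝ) s, ‖x u - x₀‖ ≤ γ * (2 + ‖x₀‖) * u := by
  set c : ℝ := γ * (2 + ‖x₀‖) with hc_def
  have hc : 0 < c := by positivity
  have hT0 : (0:ℝ) ≤ T := hs0.trans hsT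
  set φ : ℝ → EuclideanSpace ℝ (Fin n) := fun u => ∫ r in (0:ℝ)..u, v r with hφ_def
  have hφx : ∀ u ∈ Set.Icc (0:ℝ) T, x u - x₀ = φ u := by
    intro u hu; rw [hxint u hu, add_sub_cancel_left]
  have hφcont : ContinuousOn φ (Set.Icc 0 T) := by
    have := intervalIntegral.continuousOn_primitive_interval' hvi Set.left_mem_uIcc
    rwa [Set.uIcc_of_le hT0] at this
  -- key estimate
  have key : ∀ r ∈ Set.Icc (0:ℝ) s, (∀ u ∈ Set.Ico (0:ℝ) r, ‖φ u‖ ≤ 1) → ‖φ r‖ ≤ c * r := by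
    intro r hr hless
    have hr0 : (0:ℝ) ≤ r := hr.1
    have hrT : r ≤ T := hr.2.trans hsT
    have hne : ∀ᵐ u : ℝ ∂volume, u ≠ r := by
      rw [MeasureTheory.ae_iff]
      simp only [ne_eq, not_not]
      rw [Set.setOf_eq_eq_singleton]
      exact measure_singleton r
    have hb : ∀ᵐ u ∂volume.restrict (Set.uIoc 0 r), ‖v u‖ ≤ c := by
      rw [Set.uIoc_of_le hr0]
      have h1 := MeasureTheory.ae_restrict_of_ae_restrict_of_subset
        (Set.Ioc_subset_Ioc le_rfl hrT) hvF
      filter_upwards [h1, MeasureTheory.ae_restrict_mem measurableSet_Ioc,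
        MeasureTheory.ae_restrict_of_ae hne] with u huF hu hune
      have huIco : u ∈ Set.Ico (0:ℝ) r := ⟨hu.1.le, lt_of_le_of_ne hu.2 hune⟩
      have huT : u ∈ Set.Icc (0:ℝ) T := ⟨hu.1.le, hu.2.trans hrT⟩
      have h3 : ‖x u‖ ≤ ‖x₀‖ + 1 := by
        have h4 : ‖x u - x₀‖ ≤ 1 := (hφx u huT) ▸ hless u huIco
        have h5 : ‖x u‖ ≤ ‖x₀‖ + ‖x u - x₀‖ := by
          simpa using norm_add_le x₀ (x u - x₀)
        linarith
      calc ‖v u‖ ≤ γ * (1 + ‖x u‖) := hgrow _ _ huF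
        _ ≤ c := by rw [hc_def]; nlinarith
    have := intervalIntegral.norm_integral_le_abs_of_norm_le hb
      (intervalIntegrable_const (c := c))
    rw [intervalIntegral.integral_const, sub_zero, smul_eq_mul,
      abs_of_nonneg (by positivity)] at this
    calc ‖φ r‖ ≤ r * c := this
      _ = c * r := mul_comm _ _
  -- continuous induction to get the uniform bound 1
  set G : Set ℝ := {r | r ∈ Set.Icc (0:ℝ) s ∧ ∀ u ∈ Set.Icc (0:ℝ) r, ‖φ u‖ ≤ 1} with hG_def
  have h0G : (0:ℝ) ∈ G := by
    refine ⟨⟨le_rfl, hs0⟩, ?_⟩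
    intro u hu
    have : u = 0 := le_antisymm hu.2 hu.1
    simp [this, hφ_def]
  have hGbdd : BddAbove G := ⟨s, fun r hr => hr.1.2⟩
  set r₀ : ℝ := sSup G with hr₀_def
  have h0r₀ : 0 ≤ r₀ := le_csSup hGbdd h0G
  have hr₀s : r₀ ≤ s := csSup_le ⟨0, h0G⟩ fun r hr => hr.1.2
  have claim1 : ∀ u ∈ Set.Ico (0:ℝ) r₀, ‖φ u‖ ≤ 1 := by
    intro u hu
    obtain ⟨r, hrG, hur⟩ := exists_lt_of_lt_csSup ⟨0, h0G⟩ hu.2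
    exact hrG.2 u ⟨hu.1, hur.le⟩
  have claim2 : ∀ u ∈ Set.Icc (0:ℝ) r₀, ‖φ u‖ ≤ 1/2 := by
    intro u hu
    have h1 : ‖φ u‖ ≤ c * u := key u ⟨hu.1, hu.2.trans hr₀s⟩
      (fun w hw => claim1 w ⟨hw.1, hw.2.trans_le hu.2⟩)
    have h2 : c * u ≤ c * s := by
      have := hu.2.trans hr₀s
      nlinarith
    linarith
  have hr₀G : r₀ ∈ G := ⟨⟨h0r₀, hr₀s⟩, fun u hu => (claim2 u hu).trans (by norm_num)⟩
  have hr₀eq : r₀ = s := by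
    by_contra hne'
    have hlt : r₀ < s := lt_of_le_of_ne hr₀s hne'
    have hmem : r₀ ∈ Set.Icc (0:ℝ) T := ⟨h0r₀, hr₀s.trans hsT⟩
    have hev : ∀ᶠ u in nhdsWithin r₀ (Set.Icc (0:ℝ) T), ‖φ u‖ < 1 := by
      have hopen : ∀ᶠ y in nhds (φ r₀), ‖y‖ < 1 := by
        refine IsOpen.mem_nhds (isOpen_lt continuous_norm continuous_const) ?_
        have := claim2 r₀ ⟨h0r₀, le_rfl⟩
        simp only [Set.mem_setOf_eq]; linarith
      exact (hφcont r₀ hmem).eventually hopen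
    obtain ⟨U, hU_open, hr₀U, hUsub⟩ := mem_nhdsWithin.mp hev
    obtain ⟨η, hη, hball⟩ := Metric.isOpen_iff.mp hU_open r₀ hr₀U
    set r' : ℝ := min s (r₀ + η/2) with hr'_def
    have hr'gt : r₀ < r' := lt_min hlt (by linarith)
    have hr's : r' ≤ s := min_le_left _ _
    have hr'G : r' ∈ G := by
      refine ⟨⟨h0r₀.trans hr'gt.le, hr's⟩, ?_⟩
      intro u hu
      rcases le_or_gt u r₀ with h | h
      · exact (claim2 u ⟨hu.1, h⟩).trans (by norm_num)
      · have huU : u ∈ U := by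
          apply hball
          rw [Metric.mem_ball, Real.dist_eq, abs_of_pos (by linarith)]
          have : u ≤ r₀ + η/2 := hu.2.trans (min_le_right _ _)
          linarith
        have huT : u ∈ Set.Icc (0:ℝ) T := ⟨hu.1, (hu.2.trans hr's).trans hsT⟩
        exact (hUsub ⟨huU, huT⟩).le
    exact absurd (le_csSup hGbdd hr'G) (not_le.mpr hr'gt)
  -- conclusion
  intro u hu
  rw [hφx u ⟨hu.1, hu.2.trans hsT⟩]
  refine key u hu fun w hw => ?_
  have : w ∈ Set.Icc (0:ℝ) r₀ := ⟨hw.1, by rw [hr₀eq]; exact hw.2.le.trans hu.2⟩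
  exact (claim2 w this).trans (by norm_num)


set_option maxHeartbeats 1000000 in
/-- for `x₀ ∈ 𝓡 \ K` and `ζ ∈ N^P_{𝓡(𝒯(x₀))}(x₀)`, one has `h(x₀,ζ) ≤ 0`. -/
theorem minHam_nonpos_of_proxNormal_sublevel {n : ℕ}
    (F : EuclideanSpace ℝ (Fin n) → Set (EuclideanSpace ℝ (Fin n)))
    (K : Set (EuclideanSpace ℝ (Fin n))) (hF : AssumptionF F) (hK : IsClosed K)
    (x₀ : EuclideanSpace ℝ (Fin n)) (hx₀R : minTime F K x₀ ≠ ⊤) (hx₀K : x₀ ∉ K)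
    (ζ : EuclideanSpace ℝ (Fin n))
    (hζ : IsProxNormal (sublevel F K (minTime F K x₀).toReal) x₀ ζ) :
    minHam F x₀ ζ ≤ 0 := by
  obtain ⟨σ, hσ0, hσ⟩ := hζ
  obtain ⟨γ, hγ, hgrow⟩ := hF.growth
  obtain ⟨L, hL, hLip⟩ := hF.locLip (Metric.closedBall x₀ 1) (isCompact_closedBall x₀ 1)
  set c : ℝ := γ * (2 + ‖x₀‖) with hc_def
  have hc : 0 < c := by positivity
  set τ₀ : ℝ := (minTime F K x₀).toReal with hτ₀_def
  have hτ₀0 : 0 ≤ τ₀ := ENNReal.toReal_nonneg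
  refine le_of_forall_pos_le_add ?_
  intro ε hε
  set D : ℝ := σ * c^2 + L * c * ‖ζ‖ + 1 with hD_def
  have hD : 0 < D := by positivity
  set δ : ℝ := min (1/(2*c)) (ε / D) with hδ_def
  have hδ0 : 0 < δ := lt_min (by positivity) (by positivity)
  have hδc : c * δ ≤ 1/2 := by
    have h1 : δ ≤ 1/(2*c) := min_le_left _ _
    have h2 : c * δ ≤ c * (1/(2*c)) := by nlinarith
    have h3 : c * (1/(2*c)) = 1/2 := by field_simp
    linarith
  -- get a near-optimal trajectory
  have hlt : minTime F K x₀ < ENNReal.ofReal (τ₀ + δ) := by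
    conv_lhs => rw [← ENNReal.ofReal_toReal hx₀R]
    exact (ENNReal.ofReal_lt_ofReal_iff (by linarith)).mpr (by linarith)
  simp only [minTime] at hlt
  obtain ⟨a, haS, halt⟩ := sInf_lt_iff.mp hlt
  obtain ⟨T, hTreach, haT⟩ := haS
  have hT0 : 0 ≤ T := hTreach.1
  obtain ⟨x, hxtraj, hxK'⟩ := hTreach.2
  have hTlt : T < τ₀ + δ := by
    rw [← haT] at halt
    exact (ENNReal.ofReal_lt_ofReal_iff (by linarith)).mp halt
  have hTpos : 0 < T := by
    rcases hT0.lt_or_eq with h | h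
    · exact h
    · exfalso
      apply hx₀K
      rw [← h] at hxK'
      rwa [hxtraj.1] at hxK'
  set s : ℝ := min δ T with hs_def
  have hs0 : 0 < s := lt_min hδ0 hTpos
  have hsδ : s ≤ δ := min_le_left _ _
  have hsT : s ≤ T := min_le_right _ _
  have hT_le : T ≤ τ₀ + s := by
    rcases le_total δ T with h | h
    · have hh : s = δ := min_eq_left h
      linarith
    · have hh : s = T := min_eq_right h
      linarith
  have hsub : x s ∈ sublevel F K τ₀ := by
    have h1 := minTime_le_of_traj hxtraj hxK' hs0.le hsT
    exact h1.trans (ENNReal.ofReal_le_ofReal (by linarith))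
  have hprox := hσ (x s) hsub
  obtain ⟨hx0, v, hvi, hvF, hxint⟩ := hxtraj
  have hsmall : c * s ≤ 1/2 := by nlinarith
  have hbound := traj_norm_bound hγ hgrow hvi hvF hxint hs0.le hsT hsmall
  set ρ : ℝ := L * (c * δ) with hρ_def
  have hρ0 : 0 ≤ ρ := le_of_lt (by positivity)
  have havg_mem : (⨍ u in Set.Ioc (0:ℝ) s, v u) ∈ Metric.cthickening ρ (F x₀) := by
    refine Convex.set_average_mem ((hF.convex x₀).cthickening ρ)
      Metric.isClosed_cthickening ?_ ?_ ?_ ?_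
    · rw [Real.volume_Ioc, sub_zero]
      simp only [ne_eq, ENNReal.ofReal_eq_zero, not_le]
      exact hs0
    · rw [Real.volume_Ioc]; exact ENNReal.ofReal_ne_top
    · have h1 := MeasureTheory.ae_restrict_of_ae_restrict_of_subset
        (Set.Ioc_subset_Ioc le_rfl hsT) hvF
      filter_upwards [h1, MeasureTheory.ae_restrict_mem measurableSet_Ioc] with u huF hu
      have huIcc : u ∈ Set.Icc (0:ℝ) s := ⟨hu.1.le, hu.2⟩
      have hxu : ‖x u - x₀‖ ≤ c * δ := by
        have := hbound u huIcc
        nlinarith [hu.2]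
      have hxuC : x u ∈ Metric.closedBall x₀ 1 := by
        rw [Metric.mem_closedBall, dist_eq_norm]
        linarith
      obtain ⟨w, hwF, hvw⟩ :=
        hLip (x u) hxuC x₀ (Metric.mem_closedBall_self zero_le_one) (v u) huF
      refine Metric.mem_cthickening_of_dist_le (v u) w ρ (F x₀) hwF ?_
      rw [dist_eq_norm]
      calc ‖v u - w‖ ≤ L * ‖x u - x₀‖ := hvw
        _ ≤ ρ := by rw [hρ_def]; nlinarith
    · exact (hvi.mono_set (by
        rw [Set.uIcc_of_le hs0.le, Set.uIcc_of_le hT0]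
        exact Set.Icc_subset_Icc le_rfl hsT)).1
  have hvol : (volume (Set.Ioc (0:ℝ) s)).toReal = s := by
    rw [Real.volume_Ioc, sub_zero, ENNReal.toReal_ofReal hs0.le]
  have hint_eq : (∫ u in Set.Ioc (0:ℝ) s, v u) = x s - x₀ := by
    rw [← intervalIntegral.integral_of_le hs0.le, hxint s ⟨hs0.le, hsT⟩, add_sub_cancel_left]
  rw [MeasureTheory.setAverage_eq, measureReal_def, hvol, hint_eq] at havg_mem
  obtain ⟨w, hwF, hwdist⟩ :=
    (hF.compact x₀).exists_infDist_eq_dist (hF.nonempty x₀) (s⁻¹ • (x s - x₀))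
  have hdist_le : dist (s⁻¹ • (x s - x₀)) w ≤ ρ := by
    rw [← hwdist]
    have h2 := Metric.mem_cthickening_iff.mp havg_mem
    have h3 := ENNReal.toReal_mono ENNReal.ofReal_ne_top h2
    rw [ENNReal.toReal_ofReal hρ0] at h3
    exact h3
  have hmin_le : minHam F x₀ ζ ≤ ⟪w, ζ⟫ := by
    have hcont : Continuous fun u : EuclideanSpace ℝ (Fin n) => ⟪u, ζ⟫ :=
      continuous_id.inner continuous_const
    have hbdd : BddBelow ((fun u => ⟪u, ζ⟫) '' F x₀) :=
      ((hF.compact x₀).image hcont).bddBelow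
    exact csInf_le hbdd (Set.mem_image_of_mem _ hwF)
  have hA : ⟪x s - x₀, ζ⟫ ≤ σ * ‖x s - x₀‖^2 := by
    rw [real_inner_comm]; exact hprox
  have hxs : ‖x s - x₀‖ ≤ c * s := hbound s ⟨hs0.le, le_rfl⟩
  have h5 : ⟪s⁻¹ • (x s - x₀), ζ⟫ ≤ σ * c^2 * s := by
    rw [real_inner_smul_left]
    have h6 : ⟪x s - x₀, ζ⟫ ≤ σ * (c*s)^2 :=
      hA.trans (mul_le_mul_of_nonneg_left (pow_le_pow_left₀ (norm_nonneg _) hxs 2) hσ0)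
    have h7 : s⁻¹ * ⟪x s - x₀, ζ⟫ ≤ s⁻¹ * (σ * (c*s)^2) :=
      mul_le_mul_of_nonneg_left h6 (by positivity)
    have h8 : s⁻¹ * (σ * (c*s)^2) = σ * c^2 * s := by
      field_simp
    linarith
  have h7 : ⟪w, ζ⟫ ≤ σ * c^2 * s + ρ * ‖ζ‖ := by
    have h8 : ⟪w, ζ⟫ = ⟪s⁻¹ • (x s - x₀), ζ⟫ + ⟪w - s⁻¹ • (x s - x₀), ζ⟫ := by
      rw [← inner_add_left]
      congr 1
      abel
    rw [h8]
    have h9 : ⟪w - s⁻¹ • (x s - x₀), ζ⟫ ≤ ‖w - s⁻¹ • (x s - x₀)‖ * ‖ζ‖ :=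
      real_inner_le_norm _ _
    have h10 : ‖w - s⁻¹ • (x s - x₀)‖ ≤ ρ := by
      rw [norm_sub_rev, ← dist_eq_norm]
      exact hdist_le
    nlinarith [norm_nonneg ζ]
  have hfin : σ * c^2 * s + ρ * ‖ζ‖ ≤ ε := by
    have hδD : δ ≤ ε / D := min_le_right _ _
    have h11 : σ * c^2 * s + ρ * ‖ζ‖ ≤ δ * D := by
      rw [hρ_def, hD_def]
      nlinarith [norm_nonneg ζ, mul_nonneg (mul_nonneg hσ0 (sq_nonneg c)) (sub_nonneg.mpr hsδ)]
    have h12 : δ * D ≤ ε := (le_div_iff₀ hD).mp hδD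
    linarith
  linarith
end
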